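/- arXiv:1706.06017 — 4 statements merged into one kernel-verified Lean document; each statement's English description precedes it below -/
import Mathlib

section
/- Let E be a p-convex Banach function lattice on a σ-finite measure space with M^(p)(E) = 1, let 1 ≤ p ≤ q < ∞ and 1/r = 1/p − 1/q. Then for every finite sequence x_1, …, x_n in E, sup_{(β_k) ∈ B_r^n} ‖( ∑_{k=1}^n |β_k x_k|^p )^{1/p}‖_E = sup_{x* ∈ B⁺_{(E_p)*}} ( ∑_{k=1}^n ⟨|x_k|^p, x*⟩^{q/p} )^{1/q}, where B⁺_{(E_p)*} is the positive part of the closed unit ball of the dual of the p-concavification E_p. -/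
open MeasureTheory Filter

noncomputable section

section Preamble

variable {Ω : Type} [MeasurableSpace Ω] {μ : Measure Ω}

/-- The a.e.-class of `ω ↦ |f ω| ^ e` (real power). -/
def rpowAbs (e : ℝ) (f : Ω →ₘ[μ] ℝ) : Ω →ₘ[μ] ℝ :=
  AEEqFun.mk (fun ω => |f ω| ^ e)
    (((measurable_abs.comp_aemeasurable f.aestronglyMeasurable.aemeasurable).pow
        aemeasurable_const).aestronglyMeasurable)

/-- The a.e.-class of `ω ↦ (∑ k, |x k ω| ^ p) ^ (1/p)`. -/
def pSum (p : ℝ) {n : ℕ} (x : Fin n → (Ω →ₘ[μ] ℝ)) : Ω →ₘ[μ] ℝ :=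
  AEEqFun.mk (fun ω => (∑ k, |x k ω| ^ p) ^ p⁻¹)
    (((Finset.aemeasurable_fun_sum Finset.univ fun k _ =>
        ((measurable_abs.comp_aemeasurable (x k).aestronglyMeasurable.aemeasurable).pow
          aemeasurable_const)).pow
      aemeasurable_const).aestronglyMeasurable)

/-- A Banach function lattice on a measure space `(Ω, μ)`: an order ideal of `L⁰(μ)`
equipped with a complete lattice norm. -/
structure BFL (Ω : Type) [MeasurableSpace Ω] (μ : Measure Ω) where
  mem : (Ω →ₘ[μ] ℝ) → Prop
  nrm : (Ω →ₘ[μ] ℝ) → ℝ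
  zero_mem : mem 0
  add_mem : ∀ f g, mem f → mem g → mem (f + g)
  smul_mem : ∀ (c : ℝ) f, mem f → mem (c • f)
  ideal : ∀ f g, mem g → |f| ≤ |g| → mem f
  nrm_nonneg : ∀ f, 0 ≤ nrm f
  nrm_eq_zero : ∀ f, mem f → nrm f = 0 → f = 0
  nrm_triangle : ∀ f g, mem f → mem g → nrm (f + g) ≤ nrm f + nrm g
  nrm_smul : ∀ (c : ℝ) f, mem f → nrm (c • f) = |c| * nrm f
  nrm_mono : ∀ f g, mem g → |f| ≤ |g| → nrm f ≤ nrm g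
  complete : ∀ u : ℕ → (Ω →ₘ[μ] ℝ), (∀ n, mem (u n)) →
    (∀ ε : ℝ, 0 < ε → ∃ N, ∀ m ≥ N, ∀ k ≥ N, nrm (u m - u k) < ε) →
    ∃ f, mem f ∧ Tendsto (fun n => nrm (u n - f)) atTop (nhds 0)

/-- `p`-convexity with constant `C`. -/
def BFL.pConvex (X : BFL Ω μ) (p C : ℝ) : Prop :=
  ∀ (n : ℕ) (x : Fin n → (Ω →ₘ[μ] ℝ)), (∀ k, X.mem (x k)) →
    X.mem (pSum p x) ∧ X.nrm (pSum p x) ≤ C * (∑ k, X.nrm (x k) ^ p) ^ p⁻¹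

/-- `p`-concavity with constant `C`. -/
def BFL.pConcave (X : BFL Ω μ) (p C : ℝ) : Prop :=
  ∀ (n : ℕ) (x : Fin n → (Ω →ₘ[μ] ℝ)), (∀ k, X.mem (x k)) →
    (∑ k, X.nrm (x k) ^ p) ^ p⁻¹ ≤ C * X.nrm (pSum p x)

/-- Order continuity of a function norm: decreasing sequences with infimum `0`
have norms tending to `0`. -/
def OrderContOn (mem : (Ω →ₘ[μ] ℝ) → Prop) (nrm : (Ω →ₘ[μ] ℝ) → ℝ) : Prop :=
  ∀ f : ℕ → (Ω →ₘ[μ] ℝ), (∀ n, mem (f n)) → (∀ n, f (n + 1) ≤ f n) → (∀ n, 0 ≤ f n) →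
    (∀ g, (∀ n, g ≤ f n) → g ≤ 0) → Tendsto (fun n => nrm (f n)) atTop (nhds 0)

/-- Order continuity of a Banach function lattice. -/
def BFL.OrderCont (X : BFL Ω μ) : Prop := OrderContOn X.mem X.nrm

/-- The Fatou property. -/
def BFL.Fatou (X : BFL Ω μ) : Prop :=
  ∀ (f : ℕ → (Ω →ₘ[μ] ℝ)) (g : Ω →ₘ[μ] ℝ), (∀ n, X.mem (f n)) → (∀ n, 0 ≤ f n) →
    Monotone f → (∀ n, f n ≤ g) → (∀ h, (∀ n, f n ≤ h) → g ≤ h) →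
    BddAbove (Set.range fun n => X.nrm (f n)) →
    X.mem g ∧ Tendsto (fun n => X.nrm (f n)) atTop (nhds (X.nrm g))

/-- The closed unit ball `B_r^n` of `ℓ_r^n` where `1/r = 1/p - 1/q` (`r = ∞` when `p = q`). -/
def strongBall (p q : ℝ) (n : ℕ) : Set (Fin n → ℝ) :=
  {β | if p = q then ∀ k, |β k| ≤ 1 else ∑ k, |β k| ^ (1 / p - 1 / q)⁻¹ ≤ 1}

/-- `sup_{β ∈ B_r^n} ‖(∑_k |β_k x_k|^p)^{1/p}‖`, where `1/r = 1/p - 1/q`. -/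
def strongSup (nrm : (Ω →ₘ[μ] ℝ) → ℝ) (p q : ℝ) {n : ℕ} (x : Fin n → (Ω →ₘ[μ] ℝ)) : ℝ :=
  ⨆ β : strongBall p q n, nrm (pSum p fun k => β.1 k • x k)

/-- Membership in the `p`-concavification: `f ∈ X_p ↔ |f|^{1/p} ∈ X`. -/
def cMem (mem : (Ω →ₘ[μ] ℝ) → Prop) (p : ℝ) (f : Ω →ₘ[μ] ℝ) : Prop := mem (rpowAbs p⁻¹ f)

/-- The norm of the `p`-concavification: `‖f‖_{X_p} = ‖|f|^{1/p}‖_X ^ p`. -/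
def cNrm (nrm : (Ω →ₘ[μ] ℝ) → ℝ) (p : ℝ) (f : Ω →ₘ[μ] ℝ) : ℝ := nrm (rpowAbs p⁻¹ f) ^ p

/-- The positive part of the closed dual unit ball of a function norm: positive functionals
of norm at most one, as bare functions on `L⁰`. -/
def dualBallPos (mem : (Ω →ₘ[μ] ℝ) → Prop) (nrm : (Ω →ₘ[μ] ℝ) → ℝ) :
    Set ((Ω →ₘ[μ] ℝ) → ℝ) :=
  {φ | (∀ f g, mem f → mem g → φ (f + g) = φ f + φ g) ∧
       (∀ (c : ℝ) f, mem f → φ (c • f) = c * φ f) ∧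
       (∀ f, mem f → 0 ≤ f → 0 ≤ φ f) ∧
       (∀ f, mem f → |φ f| ≤ nrm f)}

/-- The closed dual unit ball of a function norm. -/
def dualBall (mem : (Ω →ₘ[μ] ℝ) → Prop) (nrm : (Ω →ₘ[μ] ℝ) → ℝ) :
    Set ((Ω →ₘ[μ] ℝ) → ℝ) :=
  {φ | (∀ f g, mem f → mem g → φ (f + g) = φ f + φ g) ∧
       (∀ (c : ℝ) f, mem f → φ (c • f) = c * φ f) ∧
       (∀ f, mem f → |φ f| ≤ nrm f)}

/-- The positive part of the dual unit ball, as a type carrying the weak* (pointwise)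
topology and its Borel σ-algebra. -/
def DualPos (mem : (Ω →ₘ[μ] ℝ) → Prop) (nrm : (Ω →ₘ[μ] ℝ) → ℝ) : Type _ :=
  ↥(dualBallPos mem nrm)

instance {mem : (Ω →ₘ[μ] ℝ) → Prop} {nrm : (Ω →ₘ[μ] ℝ) → ℝ} :
    TopologicalSpace (DualPos (μ := μ) mem nrm) :=
  inferInstanceAs (TopologicalSpace ↥(dualBallPos mem nrm))

instance {mem : (Ω →ₘ[μ] ℝ) → Prop} {nrm : (Ω →ₘ[μ] ℝ) → ℝ} :
    MeasurableSpace (DualPos (μ := μ) mem nrm) := borel _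

instance {mem : (Ω →ₘ[μ] ℝ) → Prop} {nrm : (Ω →ₘ[μ] ℝ) → ℝ} :
    BorelSpace (DualPos (μ := μ) mem nrm) := ⟨rfl⟩

/-- Evaluation of a functional in the dual ball. -/
def DualPos.app {mem : (Ω →ₘ[μ] ℝ) → Prop} {nrm : (Ω →ₘ[μ] ℝ) → ℝ}
    (φ : DualPos (μ := μ) mem nrm) (f : Ω →ₘ[μ] ℝ) : ℝ :=
  Subtype.val φ f

/-- The seminorm `‖f‖_{p,q,ν} = (∫ ⟨|f|^p, φ⟩^{q/p} dν(φ))^{1/q}`. -/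
def pqNrm {mem : (Ω →ₘ[μ] ℝ) → Prop} {nrm : (Ω →ₘ[μ] ℝ) → ℝ} (p q : ℝ)
    (ν : Measure (DualPos (μ := μ) mem nrm)) (f : Ω →ₘ[μ] ℝ) : ℝ :=
  (∫ φ, (DualPos.app φ (rpowAbs p f)) ^ (q / p) ∂ν) ^ q⁻¹

/-- Membership in the Köthe dual of a function space. -/
def kMem (mem : (Ω →ₘ[μ] ℝ) → Prop) (h : Ω →ₘ[μ] ℝ) : Prop :=
  ∀ f, mem f → ∫⁻ ω, ENNReal.ofReal |f ω * h ω| ∂μ < ⊤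

/-- The Köthe dual norm. -/
def kNrm (mem : (Ω →ₘ[μ] ℝ) → Prop) (nrm : (Ω →ₘ[μ] ℝ) → ℝ) (h : Ω →ₘ[μ] ℝ) : ℝ :=
  ⨆ f : {f : Ω →ₘ[μ] ℝ // mem f ∧ nrm f ≤ 1}, ∫ ω, |f.1 ω * h ω| ∂μ

/-- The positive part of the closed unit ball of the Köthe dual. -/
def kothePosBall (mem : (Ω →ₘ[μ] ℝ) → Prop) (nrm : (Ω →ₘ[μ] ℝ) → ℝ) :
    Set (Ω →ₘ[μ] ℝ) :=
  {h | 0 ≤ h ∧ ∀ f, mem f → ∫⁻ ω, ENNReal.ofReal |f ω * h ω| ∂μ ≤ ENNReal.ofReal (nrm f)}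

/-- The positive part of the Köthe-dual unit ball, as a type carrying the topology
`σ(X', X)` of pointwise convergence of the pairings, and its Borel σ-algebra. -/
def KBallPos (mem : (Ω →ₘ[μ] ℝ) → Prop) (nrm : (Ω →ₘ[μ] ℝ) → ℝ) : Type _ :=
  ↥(kothePosBall (μ := μ) mem nrm)

/-- The underlying function of an element of the Köthe-dual ball. -/
def KBallPos.fn {mem : (Ω →ₘ[μ] ℝ) → Prop} {nrm : (Ω →ₘ[μ] ℝ) → ℝ}
    (h : KBallPos (μ := μ) mem nrm) : Ω →ₘ[μ] ℝ :=
  Subtype.val h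

instance {mem : (Ω →ₘ[μ] ℝ) → Prop} {nrm : (Ω →ₘ[μ] ℝ) → ℝ} :
    TopologicalSpace (KBallPos (μ := μ) mem nrm) :=
  TopologicalSpace.induced
    (fun h => fun f : (Ω →ₘ[μ] ℝ) => ∫ ω, f ω * (KBallPos.fn h) ω ∂μ) Pi.topologicalSpace

instance {mem : (Ω →ₘ[μ] ℝ) → Prop} {nrm : (Ω →ₘ[μ] ℝ) → ℝ} :
    MeasurableSpace (KBallPos (μ := μ) mem nrm) := borel _

/-- Membership in the space `S^q_{X_p}(ξ)`. -/
def sMem {mem : (Ω →ₘ[μ] ℝ) → Prop} {nrm : (Ω →ₘ[μ] ℝ) → ℝ} (p q : ℝ)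
    (ξ : Measure (KBallPos (μ := μ) mem nrm)) (f : Ω →ₘ[μ] ℝ) : Prop :=
  (∫⁻ h, (∫⁻ ω, ENNReal.ofReal (|f ω| ^ p * (KBallPos.fn h) ω) ∂μ) ^ (q / p) ∂ξ) < ⊤

/-- The norm of the space `S^q_{X_p}(ξ)`:
`‖f‖ = (∫ (∫ |f|^p h dμ)^{q/p} dξ(h))^{1/q}`. -/
def sNrm {mem : (Ω →ₘ[μ] ℝ) → Prop} {nrm : (Ω →ₘ[μ] ℝ) → ℝ} (p q : ℝ)
    (ξ : Measure (KBallPos (μ := μ) mem nrm)) (f : Ω →ₘ[μ] ℝ) : ℝ :=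
  ((∫⁻ h, (∫⁻ ω, ENNReal.ofReal (|f ω| ^ p * (KBallPos.fn h) ω) ∂μ) ^ (q / p) ∂ξ) ^ q⁻¹).toReal

end Preamble

section Operators

/-- A bounded linear operator between Banach function lattices, as a map of `L⁰` spaces. -/
def IsBddOp {Ω₁ Ω₂ : Type} [MeasurableSpace Ω₁] [MeasurableSpace Ω₂]
    {μ₁ : Measure Ω₁} {μ₂ : Measure Ω₂} (X : BFL Ω₁ μ₁) (Y : BFL Ω₂ μ₂)
    (T : (Ω₁ →ₘ[μ₁] ℝ) → (Ω₂ →ₘ[μ₂] ℝ)) : Prop :=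
  (∀ f, X.mem f → Y.mem (T f)) ∧
  (∀ f g, X.mem f → X.mem g → T (f + g) = T f + T g) ∧
  (∀ (c : ℝ) f, X.mem f → T (c • f) = c • T f) ∧
  ∃ K, ∀ f, X.mem f → Y.nrm (T f) ≤ K * X.nrm f

/-- A bounded linear operator from a Banach function lattice into a normed space. -/
def IsBddOpE {Ω : Type} [MeasurableSpace Ω] {μ : Measure Ω} (X : BFL Ω μ) {E : Type}
    [NormedAddCommGroup E] [NormedSpace ℝ E] (T : (Ω →ₘ[μ] ℝ) → E) : Prop :=
  (∀ f g, X.mem f → X.mem g → T (f + g) = T f + T g) ∧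
  (∀ (c : ℝ) f, X.mem f → T (c • f) = c • T f) ∧
  ∃ K, ∀ f, X.mem f → ‖T f‖ ≤ K * X.nrm f

/-- `T : X → Y` is `(p₁,p₂)`-strongly `(q₁,q₂)`-concave with constant `C`:
`|∑ₖ ⟨T xₖ, yₖ'⟩| ≤ C · sup_{α ∈ B_{r₁}} ‖(∑ |αₖ xₖ|^{p₁})^{1/p₁}‖_X ·
sup_{β ∈ B_{r₂}} ‖(∑ |βₖ yₖ'|^{p₂})^{1/p₂}‖_{Y'}` for all finite sequences in `X` and `Y'`. -/
def StrongPair {Ω₁ Ω₂ : Type} [MeasurableSpace Ω₁] [MeasurableSpace Ω₂]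
    {μ₁ : Measure Ω₁} {μ₂ : Measure Ω₂} (X : BFL Ω₁ μ₁) (Y : BFL Ω₂ μ₂)
    (p₁ q₁ p₂ q₂ : ℝ) (T : (Ω₁ →ₘ[μ₁] ℝ) → (Ω₂ →ₘ[μ₂] ℝ)) (C : ℝ) : Prop :=
  ∀ (n : ℕ) (x : Fin n → (Ω₁ →ₘ[μ₁] ℝ)) (y : Fin n → (Ω₂ →ₘ[μ₂] ℝ)),
    (∀ k, X.mem (x k)) → (∀ k, kMem Y.mem (y k)) →
    |∑ k, ∫ ω, (T (x k)) ω * (y k) ω ∂μ₂| ≤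
      C * (strongSup X.nrm p₁ q₁ x * strongSup (kNrm Y.mem Y.nrm) p₂ q₂ y)

/-- A bounded `m`-linear operator on a product of Banach function lattices. -/
def MultilinearBdd {m : ℕ} {Ω : Fin m → Type} [∀ j, MeasurableSpace (Ω j)]
    {μ : ∀ j, Measure (Ω j)} (X : ∀ j, BFL (Ω j) (μ j))
    {Y : Type} [NormedAddCommGroup Y] [NormedSpace ℝ Y]
    (T : (∀ j, (Ω j →ₘ[μ j] ℝ)) → Y) : Prop :=
  (∀ x, (∀ j, (X j).mem (x j)) → ∀ j f g, (X j).mem f → (X j).mem g →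
      T (Function.update x j (f + g)) = T (Function.update x j f) + T (Function.update x j g)) ∧
  (∀ x, (∀ j, (X j).mem (x j)) → ∀ j (c : ℝ) f, (X j).mem f →
      T (Function.update x j (c • f)) = c • T (Function.update x j f)) ∧
  ∃ K, ∀ x, (∀ j, (X j).mem (x j)) → ‖T x‖ ≤ K * ∏ j, (X j).nrm (x j)

/-- An `m`-linear operator is `(p₁,…,p_m)`-strongly `(q₁,…,q_m)`-concave with constant `C`,
where `1/q = ∑ⱼ 1/qⱼ`:
`(∑ₖ ‖T(x¹ₖ,…,xᵐₖ)‖^q)^{1/q} ≤ C ∏ⱼ sup_{βʲ ∈ B_{rⱼ}} ‖(∑ₖ |βʲₖ xʲₖ|^{pⱼ})^{1/pⱼ}‖_{Xⱼ}`. -/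
def StronglyConcaveML {m : ℕ} {Ω : Fin m → Type} [∀ j, MeasurableSpace (Ω j)]
    {μ : ∀ j, Measure (Ω j)} (X : ∀ j, BFL (Ω j) (μ j)) (p q : Fin m → ℝ)
    {Y : Type} [NormedAddCommGroup Y]
    (T : (∀ j, (Ω j →ₘ[μ j] ℝ)) → Y) (C : ℝ) : Prop :=
  ∀ (n : ℕ) (x : ∀ j, Fin n → (Ω j →ₘ[μ j] ℝ)), (∀ j k, (X j).mem (x j k)) →
    (∑ k, ‖T fun j => x j k‖ ^ (∑ j, (q j)⁻¹)⁻¹) ^ (∑ j, (q j)⁻¹) ≤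
      C * ∏ j, strongSup (X j).nrm (p j) (q j) (x j)

/-- A Banach space, packaged as a structure. -/
structure BanachSpaceStruct where
  E : Type
  grp : NormedAddCommGroup E
  mod : NormedSpace ℝ E
  cpl : CompleteSpace E

attribute [instance] BanachSpaceStruct.grp BanachSpaceStruct.mod BanachSpaceStruct.cpl

end Operators


section S3Aux

variable {Ω : Type} [MeasurableSpace Ω] {μ : Measure Ω}

namespace S3

lemma coeFn_rpowAbs (e : ℝ) (f : Ω →ₘ[μ] ℝ) :
    ⇑(rpowAbs e f) =ᵐ[μ] fun ω => |f ω| ^ e := AEEqFun.coeFn_mk _ _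

lemma coeFn_pSum (p : ℝ) {n : ℕ} (x : Fin n → (Ω →ₘ[μ] ℝ)) :
    ⇑(pSum p x) =ᵐ[μ] fun ω => (∑ k, |x k ω| ^ p) ^ p⁻¹ := AEEqFun.coeFn_mk _ _

lemma le_ae {f g : Ω →ₘ[μ] ℝ} (h : ∀ᵐ ω ∂μ, f ω ≤ g ω) : f ≤ g := AEEqFun.coeFn_le.mp h

lemma ae_le {f g : Ω →ₘ[μ] ℝ} (h : f ≤ g) : ∀ᵐ ω ∂μ, f ω ≤ g ω := AEEqFun.coeFn_le.mpr h

lemma abs_le_abs_ae {f g : Ω →ₘ[μ] ℝ} (h : ∀ᵐ ω ∂μ, |f ω| ≤ |g ω|) : |f| ≤ |g| := by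
  apply le_ae
  filter_upwards [AEEqFun.coeFn_abs f, AEEqFun.coeFn_abs g, h] with ω h1 h2 h3
  rw [h1, h2]; exact h3

lemma ae_abs_le_abs {f g : Ω →ₘ[μ] ℝ} (h : |f| ≤ |g|) : ∀ᵐ ω ∂μ, |f ω| ≤ |g ω| := by
  filter_upwards [AEEqFun.coeFn_abs f, AEEqFun.coeFn_abs g, ae_le h] with ω h1 h2 h3
  rw [← h1, ← h2]; exact h3

lemma nonneg_ae {f : Ω →ₘ[μ] ℝ} (h : ∀ᵐ ω ∂μ, 0 ≤ f ω) : 0 ≤ f := by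
  apply le_ae
  filter_upwards [AEEqFun.coeFn_zero (β := ℝ) (μ := μ), h] with ω h0 h1
  simp only [Pi.zero_apply] at h0
  rw [h0]; exact h1

lemma ae_nonneg {f : Ω →ₘ[μ] ℝ} (h : 0 ≤ f) : ∀ᵐ ω ∂μ, 0 ≤ f ω := by
  filter_upwards [AEEqFun.coeFn_zero (β := ℝ) (μ := μ), ae_le h] with ω h0 h1
  simp only [Pi.zero_apply] at h0
  rw [← h0]; exact h1

lemma coeFn_finsum {ι : Type} (s : Finset ι) (f : ι → (Ω →ₘ[μ] ℝ)) :
    ⇑(∑ k ∈ s, f k) =ᵐ[μ] fun ω => ∑ k ∈ s, f k ω := by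
  classical
  induction s using Finset.induction_on with
  | empty => simp only [Finset.sum_empty]; exact AEEqFun.coeFn_zero
  | @insert a s ha ih =>
    rw [Finset.sum_insert ha]
    filter_upwards [AEEqFun.coeFn_add (f a) (∑ k ∈ s, f k), ih] with ω h1 h2
    rw [Finset.sum_insert ha, h1, Pi.add_apply, h2]

lemma rpowAbs_nonneg (e : ℝ) (f : Ω →ₘ[μ] ℝ) : 0 ≤ rpowAbs e f := by
  apply nonneg_ae
  filter_upwards [coeFn_rpowAbs e f] with ω h1
  rw [h1]; exact Real.rpow_nonneg (abs_nonneg _) _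

lemma rpowAbs_inv_rpowAbs {p : ℝ} (hp : 0 < p) (f : Ω →ₘ[μ] ℝ) :
    rpowAbs p⁻¹ (rpowAbs p f) = |f| := by
  apply AEEqFun.ext
  filter_upwards [coeFn_rpowAbs p⁻¹ (rpowAbs p f), coeFn_rpowAbs p f, AEEqFun.coeFn_abs f]
    with ω h1 h2 h3
  rw [h1, h2, h3, abs_of_nonneg (Real.rpow_nonneg (abs_nonneg _) _),
    Real.rpow_rpow_inv (abs_nonneg _) hp.ne']

lemma rpowAbs_zero {e : ℝ} (he : e ≠ 0) : rpowAbs e (0 : Ω →ₘ[μ] ℝ) = 0 := by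
  apply AEEqFun.ext
  filter_upwards [coeFn_rpowAbs e (0 : Ω →ₘ[μ] ℝ), AEEqFun.coeFn_zero (β := ℝ) (μ := μ)]
    with ω h1 h0
  simp only [Pi.zero_apply] at h0
  rw [h1, h0]
  simp [Real.zero_rpow he]

lemma rpowAbs_smul {e : ℝ} (c : ℝ) (f : Ω →ₘ[μ] ℝ) :
    rpowAbs e (c • f) = |c| ^ e • rpowAbs e f := by
  apply AEEqFun.ext
  filter_upwards [coeFn_rpowAbs e (c • f), AEEqFun.coeFn_smul c f,
    AEEqFun.coeFn_smul (|c| ^ e) (rpowAbs e f), coeFn_rpowAbs e f] with ω h1 h2 h3 h4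
  rw [h1, h2, h3, Pi.smul_apply, Pi.smul_apply, smul_eq_mul, smul_eq_mul, h4, abs_mul,
    Real.mul_rpow (abs_nonneg _) (abs_nonneg _)]

lemma nrm_zero (E : BFL Ω μ) : E.nrm 0 = 0 := by
  have h := E.nrm_smul 0 0 E.zero_mem
  simpa using h

lemma cMem_zero (E : BFL Ω μ) {p : ℝ} (hp : 0 < p) : cMem E.mem p (0 : Ω →ₘ[μ] ℝ) := by
  show E.mem (rpowAbs p⁻¹ (0 : Ω →ₘ[μ] ℝ))
  rw [rpowAbs_zero (inv_ne_zero hp.ne')]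
  exact E.zero_mem

lemma cNrm_zero (E : BFL Ω μ) {p : ℝ} (hp : 0 < p) : cNrm E.nrm p (0 : Ω →ₘ[μ] ℝ) = 0 := by
  show E.nrm (rpowAbs p⁻¹ (0 : Ω →ₘ[μ] ℝ)) ^ p = 0
  rw [rpowAbs_zero (inv_ne_zero hp.ne'), nrm_zero, Real.zero_rpow hp.ne']

lemma cNrm_nonneg (E : BFL Ω μ) {p : ℝ} (f : Ω →ₘ[μ] ℝ) : 0 ≤ cNrm E.nrm p f :=
  Real.rpow_nonneg (E.nrm_nonneg _) _

lemma rpowAbs_abs_le_of_abs_le (E : BFL Ω μ) {p : ℝ} (hp : 0 < p) {f g : Ω →ₘ[μ] ℝ}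
    (h : ∀ᵐ ω ∂μ, |f ω| ≤ |g ω|) : |rpowAbs p⁻¹ f| ≤ |rpowAbs p⁻¹ g| := by
  apply abs_le_abs_ae
  filter_upwards [coeFn_rpowAbs p⁻¹ f, coeFn_rpowAbs p⁻¹ g, h] with ω h1 h2 h3
  rw [h1, h2, abs_of_nonneg (Real.rpow_nonneg (abs_nonneg _) _),
    abs_of_nonneg (Real.rpow_nonneg (abs_nonneg _) _)]
  exact Real.rpow_le_rpow (abs_nonneg _) h3 (by positivity)

lemma cMem_of_abs_le (E : BFL Ω μ) {p : ℝ} (hp : 0 < p) {f g : Ω →ₘ[μ] ℝ}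
    (hg : cMem E.mem p g) (h : ∀ᵐ ω ∂μ, |f ω| ≤ |g ω|) : cMem E.mem p f :=
  E.ideal _ _ hg (rpowAbs_abs_le_of_abs_le E hp h)

lemma cNrm_mono (E : BFL Ω μ) {p : ℝ} (hp : 0 < p) {f g : Ω →ₘ[μ] ℝ}
    (hg : cMem E.mem p g) (h : ∀ᵐ ω ∂μ, |f ω| ≤ |g ω|) :
    cNrm E.nrm p f ≤ cNrm E.nrm p g :=
  Real.rpow_le_rpow (E.nrm_nonneg _)
    (E.nrm_mono _ _ hg (rpowAbs_abs_le_of_abs_le E hp h)) hp.le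

lemma cMem_smul (E : BFL Ω μ) {p : ℝ} (c : ℝ) {f : Ω →ₘ[μ] ℝ} (hf : cMem E.mem p f) :
    cMem E.mem p (c • f) := by
  show E.mem (rpowAbs p⁻¹ (c • f))
  rw [rpowAbs_smul]
  exact E.smul_mem _ _ hf

lemma cNrm_smul (E : BFL Ω μ) {p : ℝ} (hp : 0 < p) (c : ℝ) {f : Ω →ₘ[μ] ℝ}
    (hf : cMem E.mem p f) : cNrm E.nrm p (c • f) = |c| * cNrm E.nrm p f := by
  show E.nrm (rpowAbs p⁻¹ (c • f)) ^ p = |c| * E.nrm (rpowAbs p⁻¹ f) ^ p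
  rw [rpowAbs_smul, E.nrm_smul _ _ hf,
    abs_of_nonneg (Real.rpow_nonneg (abs_nonneg c) _),
    Real.mul_rpow (Real.rpow_nonneg (abs_nonneg c) _) (E.nrm_nonneg _),
    Real.rpow_inv_rpow (abs_nonneg c) hp.ne']

lemma cAdd (E : BFL Ω μ) {p : ℝ} (hp : 1 ≤ p) (hconv : E.pConvex p 1) {f g : Ω →ₘ[μ] ℝ}
    (hf : cMem E.mem p f) (hg : cMem E.mem p g) :
    cMem E.mem p (f + g) ∧ cNrm E.nrm p (f + g) ≤ cNrm E.nrm p f + cNrm E.nrm p g := by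
  have hp0 : 0 < p := zero_lt_one.trans_le hp
  have hmem2 : ∀ k : Fin 2, E.mem (![rpowAbs p⁻¹ f, rpowAbs p⁻¹ g] k) := by
    intro k; fin_cases k
    · simpa [cMem] using hf
    · simpa [cMem] using hg
  obtain ⟨hwmem, hwnrm⟩ := hconv 2 ![rpowAbs p⁻¹ f, rpowAbs p⁻¹ g] hmem2
  have key : ∀ᵐ ω ∂μ, |(rpowAbs p⁻¹ (f + g)) ω| ≤ |(pSum p ![rpowAbs p⁻¹ f, rpowAbs p⁻¹ g]) ω| := by
    filter_upwards [coeFn_rpowAbs p⁻¹ (f + g), AEEqFun.coeFn_add f g,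
      coeFn_pSum p ![rpowAbs p⁻¹ f, rpowAbs p⁻¹ g], coeFn_rpowAbs p⁻¹ f, coeFn_rpowAbs p⁻¹ g]
        with ω h1 h2 h3 h4 h5
    rw [h1, h2, h3, Pi.add_apply,
      abs_of_nonneg (Real.rpow_nonneg (abs_nonneg _) _),
      abs_of_nonneg (Real.rpow_nonneg
        (Finset.sum_nonneg fun k _ => Real.rpow_nonneg (abs_nonneg _) _) _),
      Fin.sum_univ_two]
    simp only [Matrix.cons_val_zero, Matrix.cons_val_one, Matrix.head_cons]
    rw [h4, h5, abs_of_nonneg (Real.rpow_nonneg (abs_nonneg _) _),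
      abs_of_nonneg (Real.rpow_nonneg (abs_nonneg _) _),
      Real.rpow_inv_rpow (abs_nonneg _) hp0.ne', Real.rpow_inv_rpow (abs_nonneg _) hp0.ne']
    exact Real.rpow_le_rpow (abs_nonneg _) (abs_add_le _ _) (by positivity)
  refine ⟨E.ideal _ _ hwmem (abs_le_abs_ae key), ?_⟩
  have h1 : cNrm E.nrm p (f + g) ≤ (E.nrm (pSum p ![rpowAbs p⁻¹ f, rpowAbs p⁻¹ g])) ^ p :=
    Real.rpow_le_rpow (E.nrm_nonneg _) (E.nrm_mono _ _ hwmem (abs_le_abs_ae key)) hp0.le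
  refine h1.trans ?_
  have h2 : (E.nrm (pSum p ![rpowAbs p⁻¹ f, rpowAbs p⁻¹ g])) ^ p ≤
      ((∑ k : Fin 2, E.nrm (![rpowAbs p⁻¹ f, rpowAbs p⁻¹ g] k) ^ p) ^ p⁻¹) ^ p :=
    Real.rpow_le_rpow (E.nrm_nonneg _) (by simpa using hwnrm) hp0.le
  refine h2.trans ?_
  rw [Real.rpow_inv_rpow
    (Finset.sum_nonneg fun k _ => Real.rpow_nonneg (E.nrm_nonneg _) _) hp0.ne',
    Fin.sum_univ_two]
  simp only [Matrix.cons_val_zero, Matrix.cons_val_one, Matrix.head_cons]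
  exact le_refl _

lemma phi_zero {mem : (Ω →ₘ[μ] ℝ) → Prop} {nrm : (Ω →ₘ[μ] ℝ) → ℝ} {φ : (Ω →ₘ[μ] ℝ) → ℝ}
    (hφ : φ ∈ dualBallPos (μ := μ) mem nrm) (h0 : mem 0) : φ 0 = 0 := by
  have h := hφ.1 0 0 h0 h0
  simp only [add_zero] at h
  linarith

lemma phi_finsum {mem : (Ω →ₘ[μ] ℝ) → Prop} {nrm : (Ω →ₘ[μ] ℝ) → ℝ} {φ : (Ω →ₘ[μ] ℝ) → ℝ}
    (hφ : φ ∈ dualBallPos (μ := μ) mem nrm) (h0 : mem 0)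
    (hadd : ∀ f g, mem f → mem g → mem (f + g)) (hsmul : ∀ (c : ℝ) f, mem f → mem (c • f))
    {n : ℕ} (c : Fin n → ℝ) (y : Fin n → (Ω →ₘ[μ] ℝ)) (hy : ∀ k, mem (y k))
    (s : Finset (Fin n)) :
    mem (∑ k ∈ s, c k • y k) ∧ φ (∑ k ∈ s, c k • y k) = ∑ k ∈ s, c k * φ (y k) := by
  classical
  induction s using Finset.induction_on with
  | empty => simpa using ⟨h0, phi_zero hφ h0⟩
  | @insert a s ha ih =>
    have hmem_a : mem (c a • y a) := hsmul _ _ (hy a)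
    constructor
    · rw [Finset.sum_insert ha]; exact hadd _ _ hmem_a ih.1
    · rw [Finset.sum_insert ha, Finset.sum_insert ha, hφ.1 _ _ hmem_a ih.1, ih.2,
        hφ.2.1 _ _ (hy a)]

end S3

end S3Aux

section S3Aux2

variable {Ω : Type} [MeasurableSpace Ω] {μ : Measure Ω}

namespace S3

lemma exists_norming (E : BFL Ω μ) {p : ℝ} (hp : 1 ≤ p) (hconv : E.pConvex p 1)
    (g : Ω →ₘ[μ] ℝ) (hg : cMem E.mem p g) (hg0 : 0 ≤ g) :
    ∃ φ ∈ dualBallPos (cMem E.mem p) (cNrm E.nrm p), φ g = cNrm E.nrm p g := by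
  classical
  have hp0 : 0 < p := zero_lt_one.trans_le hp
  by_cases hgz : g = 0
  · refine ⟨fun _ => 0, ⟨fun _ _ _ _ => by ring, fun _ _ _ => by ring,
      fun _ _ _ => le_rfl, fun f _ => by simpa using cNrm_nonneg E f⟩, ?_⟩
    rw [hgz, cNrm_zero E hp0]
  let M : Submodule ℝ (Ω →ₘ[μ] ℝ) :=
    { carrier := {f | cMem E.mem p f}
      add_mem' := fun hf hg' => (cAdd E hp hconv hf hg').1
      zero_mem' := cMem_zero E hp0
      smul_mem' := fun c f hf => cMem_smul E c hf }
  have hMem : ∀ z : ↥M, cMem E.mem p (z : Ω →ₘ[μ] ℝ) := fun z => z.2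
  have habs_sup : ∀ f : Ω →ₘ[μ] ℝ, ∀ᵐ ω ∂μ, |(f ⊔ 0) ω| ≤ |f ω| := by
    intro f
    filter_upwards [AEEqFun.coeFn_sup f 0, AEEqFun.coeFn_zero (β := ℝ) (μ := μ)] with ω h1 h2
    rw [h1, h2, Pi.zero_apply, abs_of_nonneg le_sup_right]
    exact sup_le (le_abs_self _) (abs_nonneg _)
  have habs_supneg : ∀ f : Ω →ₘ[μ] ℝ, ∀ᵐ ω ∂μ, |((-f) ⊔ 0) ω| ≤ |f ω| := by
    intro f
    filter_upwards [AEEqFun.coeFn_sup (-f) 0, AEEqFun.coeFn_neg f,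
      AEEqFun.coeFn_zero (β := ℝ) (μ := μ)] with ω h1 h2 h3
    rw [h1, h2, h3, Pi.zero_apply, Pi.neg_apply, abs_of_nonneg le_sup_right]
    exact sup_le (neg_le_abs _) (abs_nonneg _)
  have hsup_mem : ∀ f : Ω →ₘ[μ] ℝ, cMem E.mem p f → cMem E.mem p (f ⊔ 0) :=
    fun f hf => cMem_of_abs_le E hp0 hf (habs_sup f)
  set N : ↥M → ℝ := fun z => cNrm E.nrm p ((z : Ω →ₘ[μ] ℝ) ⊔ 0) with hN
  have hNhom : ∀ c : ℝ, 0 < c → ∀ z : ↥M, N (c • z) = c * N z := by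
    intro c hc z
    have hsup : ((c • (z : Ω →ₘ[μ] ℝ)) ⊔ 0) = c • ((z : Ω →ₘ[μ] ℝ) ⊔ 0) := by
      apply AEEqFun.ext
      filter_upwards [AEEqFun.coeFn_sup (c • (z : Ω →ₘ[μ] ℝ)) 0,
        AEEqFun.coeFn_smul c (z : Ω →ₘ[μ] ℝ),
        AEEqFun.coeFn_smul c ((z : Ω →ₘ[μ] ℝ) ⊔ 0),
        AEEqFun.coeFn_sup (z : Ω →ₘ[μ] ℝ) 0,
        AEEqFun.coeFn_zero (β := ℝ) (μ := μ)] with ω h1 h2 h3 h4 h5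
      rw [h1, h2, h3, Pi.smul_apply, Pi.smul_apply, h4, h5, Pi.zero_apply, smul_eq_mul,
        smul_eq_mul, mul_max_of_nonneg _ _ hc.le, mul_zero]
    show cNrm E.nrm p (((c • z : ↥M) : Ω →ₘ[μ] ℝ) ⊔ 0) = c * cNrm E.nrm p ((z : Ω →ₘ[μ] ℝ) ⊔ 0)
    rw [Submodule.coe_smul, hsup, cNrm_smul E hp0 c (hsup_mem _ z.2), abs_of_pos hc]
  have hNadd : ∀ z w : ↥M, N (z + w) ≤ N z + N w := by
    intro z w
    have hmemsum : cMem E.mem p (((z : Ω →ₘ[μ] ℝ) ⊔ 0) + ((w : Ω →ₘ[μ] ℝ) ⊔ 0)) :=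
      (cAdd E hp hconv (hsup_mem _ z.2) (hsup_mem _ w.2)).1
    have hle2 : ∀ᵐ ω ∂μ, |(((z : Ω →ₘ[μ] ℝ) + (w : Ω →ₘ[μ] ℝ)) ⊔ 0) ω| ≤
        |((((z : Ω →ₘ[μ] ℝ) ⊔ 0) + ((w : Ω →ₘ[μ] ℝ) ⊔ 0))) ω| := by
      filter_upwards [AEEqFun.coeFn_sup ((z : Ω →ₘ[μ] ℝ) + (w : Ω →ₘ[μ] ℝ)) 0,
        AEEqFun.coeFn_add (z : Ω →ₘ[μ] ℝ) (w : Ω →ₘ[μ] ℝ),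
        AEEqFun.coeFn_add ((z : Ω →ₘ[μ] ℝ) ⊔ 0) ((w : Ω →ₘ[μ] ℝ) ⊔ 0),
        AEEqFun.coeFn_sup (z : Ω →ₘ[μ] ℝ) 0, AEEqFun.coeFn_sup (w : Ω →ₘ[μ] ℝ) 0,
        AEEqFun.coeFn_zero (β := ℝ) (μ := μ)] with ω h1 h2 h3 h4 h5 h6
      rw [h1, h2, h3, Pi.add_apply, Pi.add_apply, h4, h5, h6, Pi.zero_apply,
        abs_of_nonneg le_sup_right,
        abs_of_nonneg (add_nonneg le_sup_right le_sup_right)]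
      exact sup_le (add_le_add le_sup_left le_sup_left)
        (add_nonneg le_sup_right le_sup_right)
    have hcoe : ((z + w : ↥M) : Ω →ₘ[μ] ℝ) = (z : Ω →ₘ[μ] ℝ) + (w : Ω →ₘ[μ] ℝ) := rfl
    show cNrm E.nrm p (((z + w : ↥M) : Ω →ₘ[μ] ℝ) ⊔ 0) ≤ _
    rw [hcoe]
    exact (cNrm_mono E hp0 hmemsum hle2).trans
      (cAdd E hp hconv (hsup_mem _ z.2) (hsup_mem _ w.2)).2
  have hg0' : ∀ᵐ ω ∂μ, 0 ≤ g ω := ae_nonneg hg0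
  have hgMne : (⟨g, hg⟩ : ↥M) ≠ 0 := by
    intro h
    exact hgz (by simpa using congrArg Subtype.val h)
  set f₀ := LinearPMap.mkSpanSingleton (K := ℝ) (σ := RingHom.id ℝ) (⟨g, hg⟩ : ↥M) (cNrm E.nrm p g) hgMne with hf₀
  have hbound : ∀ z : f₀.domain, f₀ z ≤ N z.1 := by
    intro z
    obtain ⟨c, hc⟩ := Submodule.mem_span_singleton.mp z.2
    have hz2 : z = ⟨c • ⟨g, hg⟩, hc ▸ z.2⟩ := Subtype.ext hc.symm
    rw [hz2, LinearPMap.mkSpanSingleton'_apply]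
    have hzval : ((c • (⟨g, hg⟩ : ↥M) : ↥M) : Ω →ₘ[μ] ℝ) = c • g := rfl
    show c • cNrm E.nrm p g ≤ cNrm E.nrm p (((c • (⟨g, hg⟩ : ↥M) : ↥M) : Ω →ₘ[μ] ℝ) ⊔ 0)
    rw [hzval, smul_eq_mul]
    rcases le_or_gt 0 c with hc0 | hc0
    · have hsupeq : (c • g) ⊔ 0 = c • g := by
        rw [sup_eq_left]
        apply nonneg_ae
        filter_upwards [AEEqFun.coeFn_smul c g, hg0'] with ω h1 h2
        rw [h1, Pi.smul_apply, smul_eq_mul]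
        positivity
      rw [hsupeq, cNrm_smul E hp0 c hg, abs_of_nonneg hc0]
    · have hsupeq : (c • g) ⊔ 0 = 0 := by
        rw [sup_eq_right]
        apply le_ae
        filter_upwards [AEEqFun.coeFn_smul c g, hg0',
          AEEqFun.coeFn_zero (β := ℝ) (μ := μ)] with ω h1 h2 h3
        rw [h1, h3, Pi.smul_apply, smul_eq_mul, Pi.zero_apply]
        exact mul_nonpos_iff.mpr (Or.inr ⟨hc0.le, h2⟩)
      rw [hsupeq, cNrm_zero E hp0]
      exact mul_nonpos_iff.mpr (Or.inr ⟨hc0.le, cNrm_nonneg E g⟩)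
  obtain ⟨ψ, hext, hle1⟩ := exists_extension_of_le_sublinear f₀ N hNhom hNadd hbound
  have hψ_le : ∀ (f : Ω →ₘ[μ] ℝ) (h : cMem E.mem p f), ψ ⟨f, h⟩ ≤ cNrm E.nrm p f :=
    fun f h => (hle1 ⟨f, h⟩).trans (cNrm_mono E hp0 h (habs_sup f))
  have hψ_le_neg : ∀ (f : Ω →ₘ[μ] ℝ) (h : cMem E.mem p f), -ψ ⟨f, h⟩ ≤ cNrm E.nrm p f := by
    intro f h
    have hnmem : cMem E.mem p (-f) := M.neg_mem h
    have heq : (⟨-f, hnmem⟩ : ↥M) = -(⟨f, h⟩ : ↥M) := rfl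
    have h1 : ψ ⟨-f, hnmem⟩ ≤ cNrm E.nrm p ((-f) ⊔ 0) := hle1 ⟨-f, hnmem⟩
    rw [heq, map_neg] at h1
    exact h1.trans (cNrm_mono E hp0 h (habs_supneg f))
  refine ⟨fun f => if h : cMem E.mem p f then ψ ⟨f, h⟩ else 0, ⟨?_, ?_, ?_, ?_⟩, ?_⟩
  · intro f f' hf hf'
    dsimp only
    rw [dif_pos hf, dif_pos hf', dif_pos ((cAdd E hp hconv hf hf').1)]
    have heq : (⟨f + f', (cAdd E hp hconv hf hf').1⟩ : ↥M) = ⟨f, hf⟩ + ⟨f', hf'⟩ := rfl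
    rw [heq, map_add]
  · intro c f hf
    dsimp only
    rw [dif_pos hf, dif_pos (cMem_smul E c hf)]
    have heq : (⟨c • f, cMem_smul E c hf⟩ : ↥M) = c • (⟨f, hf⟩ : ↥M) := rfl
    rw [heq, LinearMap.map_smul, smul_eq_mul]
  · intro f hf hf0
    dsimp only
    rw [dif_pos hf]
    have hnmem : cMem E.mem p (-f) := M.neg_mem hf
    have heq : (⟨-f, hnmem⟩ : ↥M) = -(⟨f, hf⟩ : ↥M) := rfl
    have h1 : ψ ⟨-f, hnmem⟩ ≤ cNrm E.nrm p ((-f) ⊔ 0) := hle1 ⟨-f, hnmem⟩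
    have h2 : (-f) ⊔ 0 = 0 := by
      rw [sup_eq_right]
      apply le_ae
      filter_upwards [AEEqFun.coeFn_neg f, ae_nonneg hf0,
        AEEqFun.coeFn_zero (β := ℝ) (μ := μ)] with ω k1 k2 k3
      rw [k1, k3, Pi.neg_apply, Pi.zero_apply]
      linarith
    rw [heq, map_neg, h2, cNrm_zero E hp0] at h1
    linarith
  · intro f hf
    dsimp only
    rw [dif_pos hf, abs_le]
    exact ⟨by linarith [hψ_le_neg f hf], hψ_le f hf⟩
  · dsimp only
    rw [dif_pos hg]
    have h1 := hext ⟨⟨g, hg⟩, Submodule.mem_span_singleton_self _⟩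
    have h2 : f₀ ⟨⟨g, hg⟩, Submodule.mem_span_singleton_self _⟩ = cNrm E.nrm p g :=
      LinearPMap.mkSpanSingleton_apply ℝ ℝ hgMne (cNrm E.nrm p g)
    rw [← h2]
    exact h1

lemma dual_le {p q : ℝ} (hp : 1 ≤ p) (hpq : p ≤ q) {n : ℕ} (a : Fin n → ℝ)
    (ha : ∀ k, 0 ≤ a k) {β : Fin n → ℝ} (hβ : β ∈ strongBall p q n) :
    ∑ k, |β k| ^ p * a k ≤ (∑ k, a k ^ (q / p)) ^ (p / q) := by
  have hp0 : 0 < p := zero_lt_one.trans_le hp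
  have hq0 : 0 < q := hp0.trans_le hpq
  rcases eq_or_lt_of_le hpq with h | h
  · rw [strongBall, Set.mem_setOf_eq, if_pos h] at hβ
    rw [← h, div_self hp0.ne']
    simp only [Real.rpow_one]
    exact Finset.sum_le_sum fun k _ =>
      mul_le_of_le_one_left (ha k) (Real.rpow_le_one (abs_nonneg _) (hβ k) hp0.le)
  · have hne : p ≠ q := h.ne
    rw [strongBall, Set.mem_setOf_eq, if_neg hne] at hβ
    have hs1 : 1 < q / p := (one_lt_div hp0).mpr h
    have hs'0 : 0 < 1 - p / q := by
      rw [sub_pos]; exact (div_lt_one hq0).mpr h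
    have hs'1 : (1 : ℝ) - p / q < 1 := by
      have : 0 < p / q := div_pos hp0 hq0
      linarith
    have hconj : Real.HolderConjugate (1 - p / q)⁻¹ (q / p) := by
      rw [Real.holderConjugate_iff]; constructor
      · exact (one_lt_inv₀ hs'0).mpr hs'1
      · rw [inv_inv, inv_div]
        ring
    have h1mul : ((1 : ℝ) / p - 1 / q) * p = 1 - p / q := by
      rw [sub_mul, one_div, one_div, inv_mul_cancel₀ hp0.ne', inv_mul_eq_div]
    have hps' : p * (1 - p / q)⁻¹ = (1 / p - 1 / q)⁻¹ :=
      eq_inv_of_mul_eq_one_right (by rw [← mul_assoc, h1mul, mul_inv_cancel₀ hs'0.ne'])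
    have hβ' : ∑ k, ((|β k| ^ p) ^ (1 - p / q)⁻¹) ≤ 1 := by
      refine le_trans (le_of_eq (Finset.sum_congr rfl fun k _ => ?_)) hβ
      rw [← Real.rpow_mul (abs_nonneg _), hps']
    have hHold := Real.inner_le_Lp_mul_Lq_of_nonneg (s := Finset.univ) hconj
      (f := fun k => |β k| ^ p) (g := a)
      (fun k _ => Real.rpow_nonneg (abs_nonneg _) _) (fun k _ => ha k)
    have h1 : (∑ k, ((|β k| ^ p) ^ (1 - p / q)⁻¹)) ^ (1 / (1 - p / q)⁻¹) ≤ 1 :=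
      Real.rpow_le_one
        (Finset.sum_nonneg fun k _ => Real.rpow_nonneg (Real.rpow_nonneg (abs_nonneg _) _) _)
        hβ' (by positivity)
    calc ∑ k, |β k| ^ p * a k ≤ _ := hHold
      _ ≤ (∑ k, a k ^ (q / p)) ^ (1 / (q / p)) :=
          mul_le_of_le_one_left
            (Real.rpow_nonneg
              (Finset.sum_nonneg fun k _ => Real.rpow_nonneg (ha k) _) _) h1
      _ = (∑ k, a k ^ (q / p)) ^ (p / q) := by rw [one_div, inv_div]

lemma dual_ge {p q : ℝ} (hp : 1 ≤ p) (hpq : p ≤ q) {n : ℕ} (a : Fin n → ℝ)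
    (ha : ∀ k, 0 ≤ a k) :
    ∃ β ∈ strongBall p q n, (∑ k, a k ^ (q / p)) ^ (p / q) ≤ ∑ k, |β k| ^ p * a k := by
  have hp0 : 0 < p := zero_lt_one.trans_le hp
  have hq0 : 0 < q := hp0.trans_le hpq
  rcases eq_or_lt_of_le hpq with h | h
  · refine ⟨fun _ => 1, ?_, ?_⟩
    · rw [strongBall, Set.mem_setOf_eq, if_pos h]
      intro k; simp
    · rw [← h, div_self hp0.ne']
      simp only [Real.rpow_one, abs_one, Real.one_rpow, one_mul]
      exact le_refl _
  · have hne : p ≠ q := h.ne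
    have hpq' : 0 < 1 / p - 1 / q := by
      rw [sub_pos]; exact one_div_lt_one_div_of_lt hp0 h
    have ht0 : 0 < (1 / p - 1 / q)⁻¹ := inv_pos.mpr hpq'
    have hA0 : 0 ≤ ∑ k, a k ^ (q / p) :=
      Finset.sum_nonneg fun k _ => Real.rpow_nonneg (ha k) _
    rcases eq_or_lt_of_le hA0 with hAz | hApos
    · refine ⟨fun _ => 0, ?_, ?_⟩
      · rw [strongBall, Set.mem_setOf_eq, if_neg hne]
        have hz : ∀ k : Fin n, |(0 : ℝ)| ^ (1 / p - 1 / q)⁻¹ = 0 := fun k => by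
          rw [abs_zero, Real.zero_rpow ht0.ne']
        rw [Finset.sum_congr rfl fun k _ => hz k]
        simp
      · rw [← hAz, Real.zero_rpow (div_pos hp0 hq0).ne']
        refine Finset.sum_nonneg fun k _ => mul_nonneg (Real.rpow_nonneg (abs_nonneg _) _) (ha k)
    · set A := ∑ k, a k ^ (q / p) with hA
      have hβnn0 : ∀ k, (0 : ℝ) ≤ a k ^ (q / p) / A :=
        fun k => div_nonneg (Real.rpow_nonneg (ha k) _) hA0
      refine ⟨fun k => (a k ^ (q / p) / A) ^ (1 / p - 1 / q), ?_, ?_⟩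
      · rw [strongBall, Set.mem_setOf_eq, if_neg hne]
        have hterm : ∀ k, |(a k ^ (q / p) / A) ^ (1 / p - 1 / q)| ^ (1 / p - 1 / q)⁻¹ =
            a k ^ (q / p) / A := by
          intro k
          rw [abs_of_nonneg (Real.rpow_nonneg (hβnn0 k) _), ← Real.rpow_mul (hβnn0 k),
            mul_inv_cancel₀ hpq'.ne', Real.rpow_one]
        rw [Finset.sum_congr rfl fun k _ => hterm k, ← Finset.sum_div, ← hA,
          div_self hApos.ne']
      · have hterm : ∀ k, |(a k ^ (q / p) / A) ^ (1 / p - 1 / q)| ^ p * a k =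
            a k ^ (q / p) / A ^ (1 - p / q) := by
          intro k
          rw [abs_of_nonneg (Real.rpow_nonneg (hβnn0 k) _), ← Real.rpow_mul (hβnn0 k)]
          have he : (1 / p - 1 / q) * p = 1 - p / q := by field_simp
          rw [he, Real.div_rpow (Real.rpow_nonneg (ha k) _) hA0,
            ← Real.rpow_mul (ha k)]
          have he2 : q / p * (1 - p / q) = q / p - 1 := by field_simp
          rw [he2, div_mul_eq_mul_div]
          congr 1
          rcases eq_or_lt_of_le (ha k) with hak | hak
          · rw [← hak, Real.zero_rpow (sub_pos.mpr ((one_lt_div hp0).mpr h)).ne',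
              Real.zero_rpow (div_pos hq0 hp0).ne', zero_mul]
          · rw [← Real.rpow_add_one hak.ne', sub_add_cancel]
        have hsplit : A ^ (p / q) = A / A ^ (1 - p / q) := by
          rw [eq_div_iff (Real.rpow_pos_of_pos hApos _).ne', ← Real.rpow_add hApos,
            show p / q + (1 - p / q) = 1 by ring, Real.rpow_one]
        rw [Finset.sum_congr rfl fun k _ => hterm k, ← Finset.sum_div, ← hA]
        exact le_of_eq hsplit

end S3

end S3Aux2

/-- Lemma `lemaequi1`: in a `p`-convex Banach function lattice `E` with
convexity constant 1, for `1 ≤ p ≤ q` and `1/r = 1/p - 1/q`,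
`sup_{β ∈ B_r^n} ‖(∑ |βₖ xₖ|^p)^{1/p}‖_E
  = sup_{x* ∈ B⁺_{(E_p)*}} (∑ ⟨|xₖ|^p, x*⟩^{q/p})^{1/q}`. -/
theorem statement3 {Ω : Type} [MeasurableSpace Ω] (μ : Measure Ω) [SigmaFinite μ]
    (E : BFL Ω μ) (p q : ℝ) (hp : 1 ≤ p) (hpq : p ≤ q)
    (hconv : E.pConvex p 1) {n : ℕ} (x : Fin n → (Ω →ₘ[μ] ℝ)) (hx : ∀ k, E.mem (x k)) :
    strongSup E.nrm p q x =
      ⨆ φ : DualPos (cMem E.mem p) (cNrm E.nrm p),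
        (∑ k, (DualPos.app φ (rpowAbs p (x k))) ^ (q / p)) ^ q⁻¹ := by
  classical
  have hp0 : 0 < p := zero_lt_one.trans_le hp
  have hq0 : 0 < q := hp0.trans_le hpq
  set F : Fin n → (Ω →ₘ[μ] ℝ) := fun k => rpowAbs p (x k) with hF
  set G : (Fin n → ℝ) → (Ω →ₘ[μ] ℝ) := fun β => ∑ k, |β k| ^ p • F k with hG
  -- coercion facts
  have hxcoe : ∀ β : Fin n → ℝ, ∀ᵐ ω ∂μ, ∀ k, (β k • x k) ω = β k * x k ω := by
    intro β
    refine ae_all_iff.mpr fun k => ?_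
    filter_upwards [AEEqFun.coeFn_smul (β k) (x k)] with ω h
    rw [h, Pi.smul_apply, smul_eq_mul]
  have hsmulFcoe : ∀ β : Fin n → ℝ, ∀ᵐ ω ∂μ, ∀ k,
      (|β k| ^ p • F k) ω = |β k| ^ p * |x k ω| ^ p := by
    intro β
    refine ae_all_iff.mpr fun k => ?_
    filter_upwards [AEEqFun.coeFn_smul (|β k| ^ p) (F k), S3.coeFn_rpowAbs p (x k)]
      with ω h1 h2
    rw [h1, Pi.smul_apply, smul_eq_mul, h2]
  have hGcoe : ∀ β : Fin n → ℝ, ∀ᵐ ω ∂μ, (G β) ω = ∑ k, |β k| ^ p * |x k ω| ^ p := by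
    intro β
    filter_upwards [S3.coeFn_finsum Finset.univ (fun k => |β k| ^ p • F k), hsmulFcoe β]
      with ω h1 h2
    rw [hG]
    rw [h1]
    exact Finset.sum_congr rfl fun k _ => h2 k
  have hG_eq : ∀ β : Fin n → ℝ, rpowAbs p⁻¹ (G β) = pSum p (fun k => β k • x k) := by
    intro β
    apply AEEqFun.ext
    filter_upwards [S3.coeFn_rpowAbs p⁻¹ (G β), hGcoe β,
      S3.coeFn_pSum p (fun k => β k • x k), hxcoe β] with ω h1 h2 h3 h4
    rw [h1, h2, h3,
      abs_of_nonneg (Finset.sum_nonneg fun k _ =>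
        mul_nonneg (Real.rpow_nonneg (abs_nonneg _) _) (Real.rpow_nonneg (abs_nonneg _) _))]
    congr 1
    refine (Finset.sum_congr rfl fun k _ => ?_).symm
    rw [h4 k, abs_mul, Real.mul_rpow (abs_nonneg _) (abs_nonneg _)]
  have hFmem : ∀ k, cMem E.mem p (F k) := by
    intro k
    show E.mem (rpowAbs p⁻¹ (F k))
    rw [hF]
    rw [S3.rpowAbs_inv_rpowAbs hp0]
    refine E.ideal _ _ (hx k) (S3.abs_le_abs_ae ?_)
    filter_upwards [AEEqFun.coeFn_abs (x k)] with ω h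
    rw [h, abs_abs]
  have hFpos : ∀ k, 0 ≤ F k := fun k => S3.rpowAbs_nonneg p (x k)
  have hGpos : ∀ β, 0 ≤ G β := by
    intro β
    apply S3.nonneg_ae
    filter_upwards [hGcoe β] with ω h
    rw [h]
    exact Finset.sum_nonneg fun k _ =>
      mul_nonneg (Real.rpow_nonneg (abs_nonneg _) _) (Real.rpow_nonneg (abs_nonneg _) _)
  have hGmem : ∀ β, cMem E.mem p (G β) := by
    intro β
    show E.mem (rpowAbs p⁻¹ (G β))
    rw [hG_eq β]
    exact (hconv n _ (fun k => E.smul_mem _ _ (hx k))).1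
  have hGnrm : ∀ β : Fin n → ℝ,
      E.nrm (pSum p fun k => β k • x k) = cNrm E.nrm p (G β) ^ p⁻¹ := by
    intro β
    rw [show cNrm E.nrm p (G β) = E.nrm (rpowAbs p⁻¹ (G β)) ^ p from rfl, hG_eq β,
      Real.rpow_rpow_inv (E.nrm_nonneg _) hp0.ne']
  have happ_nonneg : ∀ φ : DualPos (cMem E.mem p) (cNrm E.nrm p), ∀ k, 0 ≤ φ.1 (F k) :=
    fun φ k => φ.2.2.2.1 _ (hFmem k) (hFpos k)
  have happ_le : ∀ (φ : DualPos (cMem E.mem p) (cNrm E.nrm p)) (f : Ω →ₘ[μ] ℝ),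
      cMem E.mem p f → φ.1 f ≤ cNrm E.nrm p f :=
    fun φ f hf => (le_abs_self _).trans (φ.2.2.2.2 f hf)
  have hφG : ∀ (φ : (Ω →ₘ[μ] ℝ) → ℝ),
      φ ∈ dualBallPos (cMem E.mem p) (cNrm E.nrm p) → ∀ β : Fin n → ℝ,
      φ (G β) = ∑ k, |β k| ^ p * φ (F k) := by
    intro φ hφ β
    rw [hG]
    exact (S3.phi_finsum hφ (S3.cMem_zero E hp0)
      (fun f g hf hg => (S3.cAdd E hp hconv hf hg).1)
      (fun c f hf => S3.cMem_smul E c hf) (fun k => |β k| ^ p) F hFmem Finset.univ).2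
  have hbddR : BddAbove (Set.range fun φ : DualPos (cMem E.mem p) (cNrm E.nrm p) =>
      (∑ k, (DualPos.app φ (rpowAbs p (x k))) ^ (q / p)) ^ q⁻¹) := by
    refine ⟨(∑ k, (cNrm E.nrm p (F k)) ^ (q / p)) ^ q⁻¹, ?_⟩
    rintro y ⟨φ, rfl⟩
    have happ : ∀ k, DualPos.app φ (rpowAbs p (x k)) = φ.1 (F k) := fun k => by rw [hF]; rfl
    simp only [happ]
    refine Real.rpow_le_rpow
      (Finset.sum_nonneg fun k _ => Real.rpow_nonneg (happ_nonneg φ k) _)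
      (Finset.sum_le_sum fun k _ => Real.rpow_le_rpow (happ_nonneg φ k)
        (happ_le φ _ (hFmem k)) (by positivity)) (by positivity)
  have hblt : ∀ β : strongBall p q n, ∀ k, |β.1 k| ≤ 1 := by
    intro β k
    have hβ := β.2
    simp only [strongBall, Set.mem_setOf_eq] at hβ
    by_cases hpq' : p = q
    · rw [if_pos hpq'] at hβ
      exact hβ k
    · rw [if_neg hpq'] at hβ
      have ht0 : 0 < (1 / p - 1 / q)⁻¹ := by
        refine inv_pos.mpr ?_
        rw [sub_pos]
        exact one_div_lt_one_div_of_lt hp0 (lt_of_le_of_ne hpq hpq')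
      by_contra hcon
      push_neg at hcon
      have h1 : (1 : ℝ) < |β.1 k| ^ (1 / p - 1 / q)⁻¹ :=
        (Real.one_lt_rpow_iff_of_pos (lt_of_le_of_lt zero_le_one hcon)).mpr
          (Or.inl ⟨hcon, ht0⟩)
      have h2 : |β.1 k| ^ (1 / p - 1 / q)⁻¹ ≤ ∑ j, |β.1 j| ^ (1 / p - 1 / q)⁻¹ :=
        Finset.single_le_sum (fun j _ => Real.rpow_nonneg (abs_nonneg _) _)
          (Finset.mem_univ k)
      linarith
  have hbddL : BddAbove (Set.range fun β : strongBall p q n =>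
      E.nrm (pSum p fun k => β.1 k • x k)) := by
    refine ⟨(∑ k, E.nrm (x k) ^ p) ^ p⁻¹, ?_⟩
    rintro y ⟨β, rfl⟩
    have h1 := (hconv n (fun k => β.1 k • x k) (fun k => E.smul_mem _ _ (hx k))).2
    refine h1.trans ?_
    rw [one_mul]
    refine Real.rpow_le_rpow
      (Finset.sum_nonneg fun k _ => Real.rpow_nonneg (E.nrm_nonneg _) _)
      (Finset.sum_le_sum fun k _ => ?_) (by positivity)
    rw [E.nrm_smul _ _ (hx k)]
    refine Real.rpow_le_rpow (mul_nonneg (abs_nonneg _) (E.nrm_nonneg _)) ?_ hp0.le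
    exact mul_le_of_le_one_left (E.nrm_nonneg _) (hblt β k)
  have hpow_eq : ∀ c : ℝ, 0 ≤ c → (c ^ (p / q)) ^ p⁻¹ = c ^ q⁻¹ := by
    intro c hc
    rw [← Real.rpow_mul hc]
    congr 1
    field_simp
  apply le_antisymm
  · refine Real.iSup_le (fun β => ?_) ?_
    · obtain ⟨φ, hφmem, hφeq⟩ := S3.exists_norming E hp hconv (G β.1) (hGmem β.1) (hGpos β.1)
      have hφFnn : ∀ k, 0 ≤ φ (F k) := fun k => hφmem.2.2.1 _ (hFmem k) (hFpos k)
      have hsumnn : 0 ≤ ∑ k, (φ (F k)) ^ (q / p) :=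
        Finset.sum_nonneg fun k _ => Real.rpow_nonneg (hφFnn k) _
      have h1 : cNrm E.nrm p (G β.1) ≤ (∑ k, (φ (F k)) ^ (q / p)) ^ (p / q) := by
        rw [← hφeq, hφG φ hφmem β.1]
        exact S3.dual_le hp hpq _ hφFnn β.2
      have h2 : E.nrm (pSum p fun k => β.1 k • x k) ≤
          ((∑ k, (φ (F k)) ^ (q / p)) ^ (p / q)) ^ p⁻¹ := by
        rw [hGnrm β.1]
        exact Real.rpow_le_rpow (S3.cNrm_nonneg E _) h1 (by positivity)
      rw [hpow_eq _ hsumnn] at h2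
      refine h2.trans ?_
      have hkey : (∑ k, (φ (F k)) ^ (q / p)) ^ q⁻¹ =
          (∑ k, (DualPos.app (⟨φ, hφmem⟩ : DualPos (cMem E.mem p) (cNrm E.nrm p))
            (rpowAbs p (x k))) ^ (q / p)) ^ q⁻¹ := by
        rw [hF]
        rfl
      rw [hkey]
      exact le_ciSup hbddR ⟨φ, hφmem⟩
    · exact Real.iSup_nonneg fun φ => Real.rpow_nonneg
        (Finset.sum_nonneg fun k _ => Real.rpow_nonneg
          (by rw [hF] at happ_nonneg; exact happ_nonneg φ k) _) _
  · refine Real.iSup_le (fun φ => ?_) ?_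
    · obtain ⟨β, hβmem, hβval⟩ := S3.dual_ge hp hpq (fun k => φ.1 (F k)) (happ_nonneg φ)
      have hsumnn : 0 ≤ ∑ k, (φ.1 (F k)) ^ (q / p) :=
        Finset.sum_nonneg fun k _ => Real.rpow_nonneg (happ_nonneg φ k) _
      have h4 : ((∑ k, (φ.1 (F k)) ^ (q / p)) ^ (p / q)) ^ p⁻¹ ≤
          (cNrm E.nrm p (G β)) ^ p⁻¹ := by
        refine Real.rpow_le_rpow (Real.rpow_nonneg hsumnn _) ?_ (by positivity)
        refine hβval.trans ?_
        rw [← hφG φ.1 φ.2 β]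
        exact happ_le φ _ (hGmem β)
      have happ : ∀ k, DualPos.app φ (rpowAbs p (x k)) = φ.1 (F k) := fun k => by rw [hF]; rfl
      simp only [happ]
      rw [← hpow_eq _ hsumnn]
      refine h4.trans ?_
      rw [← hGnrm β]
      exact le_ciSup hbddL ⟨β, hβmem⟩
    · exact Real.iSup_nonneg fun β => E.nrm_nonneg _

end
end

section
/- Let 1 ≤ p ≤ q < ∞ and let X be a p-convex Banach function lattice on a σ-finite measure space with M^(p)(X) = 1 such that the p-concavification X_p admits a strictly positive functional (i.e., there is x* ∈ (X_p)* with ⟨x, x*⟩ > 0 whenever 0 < x ∈ X_p). Then for every regular Borel probability measure ν on B⁺_{(X_p)*} there is a regular Borel probability measure ν̃ on B⁺_{(X_p)*} such that ‖·‖_{p,q,ν̃} is a lattice norm on X (not merely a seminorm) and (1/2) ‖x‖_{p,q,ν} ≤ ‖x‖_{p,q,ν̃} ≤ ‖x‖_X for all x ∈ X. -/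
open MeasureTheory Filter

noncomputable section

section AuxRegular

variable {α : Type*} [MeasurableSpace α] [TopologicalSpace α]

/-- The Dirac measure is regular on a T1 Borel space. -/
theorem aux_regular_dirac [T1Space α] [BorelSpace α] (a : α) :
    (MeasureTheory.Measure.dirac a).Regular := by
  haveI : MeasureTheory.IsFiniteMeasureOnCompacts (MeasureTheory.Measure.dirac a) :=
    ⟨fun K _ => measure_lt_top _ _⟩
  haveI : (MeasureTheory.Measure.dirac a).OuterRegular := by
    constructor
    intro A hA r hr
    by_cases ha : a ∈ A
    · refine ⟨Set.univ, Set.subset_univ _, isOpen_univ, ?_⟩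
      rwa [MeasureTheory.Measure.dirac_apply_of_mem (Set.mem_univ a),
        ← MeasureTheory.Measure.dirac_apply_of_mem ha]
    · refine ⟨{a}ᶜ, Set.subset_compl_singleton_iff.mpr ha, isOpen_compl_singleton, ?_⟩
      have h0 : MeasureTheory.Measure.dirac a {a}ᶜ = 0 := by
        rw [MeasureTheory.Measure.dirac_apply' _ (measurableSet_singleton a).compl]
        simp
      rw [h0]
      exact lt_of_le_of_lt zero_le hr
  constructor
  intro U hU r hr
  by_cases ha : a ∈ U
  · refine ⟨{a}, Set.singleton_subset_iff.mpr ha, isCompact_singleton, ?_⟩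
    rwa [MeasureTheory.Measure.dirac_apply_of_mem (Set.mem_singleton a),
      ← MeasureTheory.Measure.dirac_apply_of_mem ha]
  · exfalso
    have h0 : MeasureTheory.Measure.dirac a U = 0 := by
      rw [MeasureTheory.Measure.dirac_apply' _ hU.measurableSet]
      simp [ha]
    rw [h0] at hr
    exact (not_lt.mpr (zero_le : 0 ≤ r)) hr

/-- The sum of two finite regular measures is regular. -/
theorem aux_regular_add (μ₁ μ₂ : Measure α) [MeasureTheory.IsFiniteMeasure μ₁]
    [MeasureTheory.IsFiniteMeasure μ₂] (h₁ : μ₁.Regular) (h₂ : μ₂.Regular) :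
    (μ₁ + μ₂).Regular := by
  haveI := h₁; haveI := h₂
  haveI : MeasureTheory.IsFiniteMeasureOnCompacts (μ₁ + μ₂) :=
    ⟨fun K _ => by
      rw [MeasureTheory.Measure.add_apply]
      exact ENNReal.add_lt_top.mpr ⟨measure_lt_top _ _, measure_lt_top _ _⟩⟩
  haveI : (μ₁ + μ₂).OuterRegular := by
    constructor
    intro A hA r hr
    rw [MeasureTheory.Measure.add_apply] at hr
    set s := μ₁ A + μ₂ A with hs
    set ε := (r - s) / 2 with hε_def
    have hsr : s < r := hr
    have hrs : r - s ≠ 0 :=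
      fun h => (not_le.mpr hsr) (tsub_eq_zero_iff_le.mp h)
    have hε : ε ≠ 0 := by
      rw [hε_def]
      simp only [ne_eq, ENNReal.div_eq_zero_iff, hrs, false_or]
      exact ENNReal.ofNat_ne_top
    obtain ⟨U₁, hU₁A, hU₁o, hU₁⟩ := Set.exists_isOpen_lt_add A (measure_ne_top μ₁ A) hε
    obtain ⟨U₂, hU₂A, hU₂o, hU₂⟩ := Set.exists_isOpen_lt_add A (measure_ne_top μ₂ A) hε
    refine ⟨U₁ ∩ U₂, Set.subset_inter hU₁A hU₂A, hU₁o.inter hU₂o, ?_⟩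
    have hlt : μ₁ (U₁ ∩ U₂) + μ₂ (U₁ ∩ U₂) < (μ₁ A + ε) + (μ₂ A + ε) :=
      ENNReal.add_lt_add
        (lt_of_le_of_lt (measure_mono Set.inter_subset_left) hU₁)
        (lt_of_le_of_lt (measure_mono Set.inter_subset_right) hU₂)
    have heq : (μ₁ A + ε) + (μ₂ A + ε) = r := by
      have h2 : ε + ε = r - s := ENNReal.add_halves _
      calc (μ₁ A + ε) + (μ₂ A + ε) = s + (ε + ε) := by rw [hs]; ring
        _ = s + (r - s) := by rw [h2]
        _ = r := add_tsub_cancel_of_le hsr.le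
    rw [MeasureTheory.Measure.add_apply]
    rwa [heq] at hlt
  constructor
  intro U hU r hr
  rw [MeasureTheory.Measure.add_apply] at hr
  rcases eq_or_ne (μ₁ U) 0 with h1 | h1
  · rw [h1, zero_add] at hr
    obtain ⟨K, hKU, hKc, hK⟩ := MeasureTheory.Measure.Regular.innerRegular hU r hr
    refine ⟨K, hKU, hKc, lt_of_lt_of_le hK ?_⟩
    rw [MeasureTheory.Measure.add_apply]
    exact le_add_self
  rcases eq_or_ne (μ₂ U) 0 with h2 | h2
  · rw [h2, add_zero] at hr
    obtain ⟨K, hKU, hKc, hK⟩ := MeasureTheory.Measure.Regular.innerRegular hU r hr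
    refine ⟨K, hKU, hKc, lt_of_lt_of_le hK ?_⟩
    rw [MeasureTheory.Measure.add_apply]
    exact le_self_add
  obtain ⟨r₁, hr₁, r₂, hr₂, hrr⟩ := ENNReal.exists_lt_add_of_lt_add hr h1 h2
  obtain ⟨K₁, hK₁U, hK₁c, hK₁⟩ := MeasureTheory.Measure.Regular.innerRegular hU r₁ hr₁
  obtain ⟨K₂, hK₂U, hK₂c, hK₂⟩ := MeasureTheory.Measure.Regular.innerRegular hU r₂ hr₂
  refine ⟨K₁ ∪ K₂, Set.union_subset hK₁U hK₂U, hK₁c.union hK₂c, ?_⟩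
  rw [MeasureTheory.Measure.add_apply]
  calc r < r₁ + r₂ := hrr
    _ ≤ μ₁ K₁ + μ₂ K₂ := add_le_add hK₁.le hK₂.le
    _ ≤ μ₁ (K₁ ∪ K₂) + μ₂ (K₁ ∪ K₂) :=
        add_le_add (measure_mono Set.subset_union_left) (measure_mono Set.subset_union_right)

end AuxRegular

/-- Lemma `S-space` (i): if the `p`-concavification of a `p`-convex Banach
function lattice `X` admits a strictly positive functional, then every regular Borel
probability measure `ν` on `B⁺_{(X_p)*}` can be replaced by one, `ν̃`, for which
`‖·‖_{p,q,ν̃}` is a norm on `X` (not merely a seminorm), with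
`(1/2)‖x‖_{p,q,ν} ≤ ‖x‖_{p,q,ν̃} ≤ ‖x‖_X` for all `x ∈ X`. -/
theorem statement4 {Ω : Type} [MeasurableSpace Ω] (μ : Measure Ω) [SigmaFinite μ]
    (X : BFL Ω μ) (p q : ℝ) (hp : 1 ≤ p) (hpq : p ≤ q) (hconv : X.pConvex p 1)
    (hstrict : ∃ φ₀ ∈ dualBallPos (μ := μ) (cMem X.mem p) (cNrm X.nrm p),
      ∀ f, cMem X.mem p f → 0 ≤ f → f ≠ 0 → 0 < φ₀ f)
    (ν : Measure (DualPos (cMem X.mem p) (cNrm X.nrm p)))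
    (hprob : IsProbabilityMeasure ν) (hreg : ν.Regular) :
    ∃ ν' : Measure (DualPos (cMem X.mem p) (cNrm X.nrm p)),
      IsProbabilityMeasure ν' ∧ ν'.Regular ∧
      (∀ f, X.mem f → pqNrm p q ν' f = 0 → f = 0) ∧
      ∀ f, X.mem f →
        (1 / 2) * pqNrm p q ν f ≤ pqNrm p q ν' f ∧ pqNrm p q ν' f ≤ X.nrm f := by
  classical
  haveI := hprob
  obtain ⟨φ₀, hφ₀mem, hφ₀pos⟩ := hstrict
  set D := DualPos (μ := μ) (cMem X.mem p) (cNrm X.nrm p) with hD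
  haveI : T2Space D := inferInstanceAs (T2Space ↥(dualBallPos (μ := μ) _ _))
  have hp0 : 0 < p := lt_of_lt_of_le one_pos hp
  have hq0 : 0 < q := lt_of_lt_of_le hp0 hpq
  have hqp0 : 0 < q / p := div_pos hq0 hp0
  set Φ : D := ⟨φ₀, hφ₀mem⟩ with hΦ
  set ν' : Measure D := (1 / 2 : ENNReal) • ν + (1 / 2 : ENNReal) • Measure.dirac Φ with hν'
  haveI hprob' : IsProbabilityMeasure ν' := by
    constructor
    rw [hν', Measure.add_apply, Measure.smul_apply, Measure.smul_apply, measure_univ,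
      measure_univ]
    simp only [smul_eq_mul, mul_one]
    exact ENNReal.add_halves 1
  haveI hfin1 : IsFiniteMeasure ((1 / 2 : ENNReal) • ν) := by
    constructor
    rw [Measure.smul_apply, measure_univ]
    simp only [smul_eq_mul, mul_one]
    exact lt_of_le_of_lt ENNReal.half_le_self ENNReal.one_lt_top
  haveI hfin2 : IsFiniteMeasure ((1 / 2 : ENNReal) • Measure.dirac Φ) := by
    constructor
    rw [Measure.smul_apply, measure_univ]
    simp only [smul_eq_mul, mul_one]
    exact lt_of_le_of_lt ENNReal.half_le_self ENNReal.one_lt_top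
  have hreg' : ν'.Regular := by
    refine aux_regular_add _ _ ?_ ?_
    · exact MeasureTheory.Measure.Regular.smul (by norm_num)
    · haveI := aux_regular_dirac Φ
      exact MeasureTheory.Measure.Regular.smul (by norm_num)
  -- key facts for a fixed `f ∈ X`
  have habs : ∀ f : Ω →ₘ[μ] ℝ, rpowAbs (μ := μ) p⁻¹ (rpowAbs p f) = |f| := by
    intro f
    have h1 : (rpowAbs (μ := μ) p f : Ω → ℝ) =ᵐ[μ] fun ω => |f ω| ^ p :=
      AEEqFun.coeFn_mk _ _
    refine AEEqFun.ext ?_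
    have h2 : (rpowAbs (μ := μ) p⁻¹ (rpowAbs p f) : Ω → ℝ) =ᵐ[μ]
        fun ω => |(rpowAbs (μ := μ) p f) ω| ^ p⁻¹ := AEEqFun.coeFn_mk _ _
    have h3 : (|f| : Ω →ₘ[μ] ℝ) =ᵐ[μ] fun ω => |f ω| := AEEqFun.coeFn_abs f
    filter_upwards [h1, h2, h3] with ω hω1 hω2 hω3
    rw [hω2, hω3, hω1, abs_of_nonneg (Real.rpow_nonneg (abs_nonneg _) _),
      ← Real.rpow_mul (abs_nonneg _), mul_inv_cancel₀ hp0.ne', Real.rpow_one]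
  have habs2 : ∀ f : Ω →ₘ[μ] ℝ, |(|f| : Ω →ₘ[μ] ℝ)| = |f| := by
    intro f
    refine AEEqFun.ext ?_
    filter_upwards [AEEqFun.coeFn_abs (|f| : Ω →ₘ[μ] ℝ), AEEqFun.coeFn_abs f] with ω h1 h2
    rw [h1, h2, abs_abs]
  have habs_mem : ∀ f : Ω →ₘ[μ] ℝ, X.mem f → X.mem |f| := fun f hf =>
    X.ideal |f| f hf (le_of_eq (habs2 f))
  have hmemg : ∀ f : Ω →ₘ[μ] ℝ, X.mem f → cMem X.mem p (rpowAbs p f) := by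
    intro f hf
    unfold cMem
    rw [habs f]
    exact habs_mem f hf
  have hnrm_abs : ∀ f : Ω →ₘ[μ] ℝ, X.mem f → X.nrm |f| = X.nrm f := fun f hf =>
    le_antisymm (X.nrm_mono |f| f hf (le_of_eq (habs2 f)))
      (X.nrm_mono f |f| (habs_mem f hf) (le_of_eq (habs2 f).symm))
  have hcn : ∀ f : Ω →ₘ[μ] ℝ, X.mem f → cNrm X.nrm p (rpowAbs p f) = X.nrm f ^ p := by
    intro f hf
    unfold cNrm
    rw [habs f, hnrm_abs f hf]
  have hg0 : ∀ f : Ω →ₘ[μ] ℝ, (0 : Ω →ₘ[μ] ℝ) ≤ rpowAbs p f := by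
    intro f
    rw [← AEEqFun.coeFn_le]
    have h1 : (rpowAbs (μ := μ) p f : Ω → ℝ) =ᵐ[μ] fun ω => |f ω| ^ p :=
      AEEqFun.coeFn_mk _ _
    filter_upwards [AEEqFun.coeFn_zero (μ := μ) (β := ℝ), h1] with ω h0 hω1
    rw [h0, hω1]
    exact Real.rpow_nonneg (abs_nonneg _) _
  have hgne : ∀ f : Ω →ₘ[μ] ℝ, f ≠ 0 → rpowAbs (μ := μ) p f ≠ 0 := by
    intro f hf hgz
    apply hf
    have h1 : (rpowAbs (μ := μ) p f : Ω → ℝ) =ᵐ[μ] fun ω => |f ω| ^ p :=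
      AEEqFun.coeFn_mk _ _
    have h2 : (fun ω => |f ω| ^ p) =ᵐ[μ] (fun _ => (0 : ℝ)) := by
      refine h1.symm.trans ?_
      rw [hgz]
      exact AEEqFun.coeFn_zero
    refine AEEqFun.ext ?_
    filter_upwards [h2, AEEqFun.coeFn_zero (μ := μ) (β := ℝ)] with ω hω2 hω0
    rw [hω0]
    have h3 : |f ω| = 0 :=
      (Real.rpow_eq_zero (abs_nonneg _) hp0.ne').mp hω2
    exact abs_eq_zero.mp h3
  -- integrand
  refine ⟨ν', hprob', hreg', ?_, ?_⟩ <;>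
  · intro f hf
    set g : Ω →ₘ[μ] ℝ := rpowAbs p f with hgdef
    set G : D → ℝ := fun φ => (DualPos.app φ g) ^ (q / p) with hGdef
    have hGnonneg : ∀ φ : D, 0 ≤ G φ := by
      intro φ
      exact Real.rpow_nonneg (φ.2.2.2.1 g (hmemg f hf) (hg0 f)) _
    have happbd : ∀ φ : D, DualPos.app φ g ≤ X.nrm f ^ p := by
      intro φ
      have := φ.2.2.2.2 g (hmemg f hf)
      rw [hcn f hf] at this
      exact le_trans (le_abs_self _) this
    have hGbd : ∀ φ : D, G φ ≤ X.nrm f ^ q := by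
      intro φ
      have h1 : G φ ≤ (X.nrm f ^ p) ^ (q / p) :=
        Real.rpow_le_rpow (φ.2.2.2.1 g (hmemg f hf) (hg0 f)) (happbd φ) hqp0.le
      rwa [← Real.rpow_mul (X.nrm_nonneg f), mul_comm, div_mul_cancel₀ q hp0.ne'] at h1
    have hGcont : Continuous G := by
      refine (Real.continuous_rpow_const hqp0.le).comp ?_
      exact (continuous_apply g).comp continuous_subtype_val
    have hbound : ∀ᵐ φ ∂(ν : Measure D), ‖G φ‖ ≤ X.nrm f ^ q := by
      refine Filter.Eventually.of_forall fun φ => ?_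
      rw [Real.norm_eq_abs, abs_of_nonneg (hGnonneg φ)]
      exact hGbd φ
    have hintν : Integrable G ν :=
      Integrable.mono' (integrable_const _) hGcont.aestronglyMeasurable hbound
    have hint1 : Integrable G ((1 / 2 : ENNReal) • ν) :=
      hintν.smul_measure (by norm_num)
    have hintd : Integrable G (Measure.dirac Φ) := by
      refine Integrable.mono' (integrable_const (X.nrm f ^ q))
        hGcont.aestronglyMeasurable ?_
      refine Filter.Eventually.of_forall fun φ => ?_
      rw [Real.norm_eq_abs, abs_of_nonneg (hGnonneg φ)]
      exact hGbd φ
    have hint2 : Integrable G ((1 / 2 : ENNReal) • Measure.dirac Φ) :=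
      hintd.smul_measure (by norm_num)
    have hint' : Integrable G ν' := by rw [hν']; exact hint1.add_measure hint2
    have htoReal : ((1 / 2 : ENNReal)).toReal = (1 / 2 : ℝ) := by norm_num
    have key : ∫ φ, G φ ∂ν' = (1 / 2) * (∫ φ, G φ ∂ν) + (1 / 2) * G Φ := by
      rw [hν', integral_add_measure hint1 hint2, integral_smul_measure, integral_smul_measure,
        integral_dirac' G Φ hGcont.stronglyMeasurable, htoReal, smul_eq_mul, smul_eq_mul]
    have hIν : (0 : ℝ) ≤ ∫ φ, G φ ∂ν := integral_nonneg hGnonneg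
    have hI' : (0 : ℝ) ≤ ∫ φ, G φ ∂ν' := integral_nonneg hGnonneg
    have hpq1 : pqNrm p q ν' f = (∫ φ, G φ ∂ν') ^ q⁻¹ := rfl
    have hpq2 : pqNrm p q ν f = (∫ φ, G φ ∂ν) ^ q⁻¹ := rfl
    -- now the two goals
    first
    | -- zero implies zero
      (intro hz
       by_contra hf0
       have hφpos : 0 < φ₀ g := hφ₀pos g (hmemg f hf) (hg0 f) (hgne f hf0)
       have hGΦpos : 0 < G Φ := Real.rpow_pos_of_pos hφpos _
       have hI'pos : 0 < ∫ φ, G φ ∂ν' := by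
         rw [key]
         linarith [hIν, hGΦpos]
       have := Real.rpow_pos_of_pos hI'pos q⁻¹
       rw [hpq1] at hz
       rw [hz] at this
       exact lt_irrefl 0 this)
    | -- the two norm inequalities
      (constructor
       · rw [hpq1, hpq2]
         have h1 : (1 / 2 : ℝ) * (∫ φ, G φ ∂ν) ≤ ∫ φ, G φ ∂ν' := by
           rw [key]
           have : 0 ≤ (1 / 2 : ℝ) * G Φ := mul_nonneg (by norm_num) (hGnonneg Φ)
           linarith
         calc (1 / 2 : ℝ) * (∫ φ, G φ ∂ν) ^ q⁻¹
             ≤ (1 / 2 : ℝ) ^ q⁻¹ * (∫ φ, G φ ∂ν) ^ q⁻¹ := by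
               refine mul_le_mul_of_nonneg_right ?_ (Real.rpow_nonneg hIν _)
               have hq1 : q⁻¹ ≤ 1 := inv_le_one_of_one_le₀ (le_trans hp hpq)
               have := Real.rpow_le_rpow_of_exponent_ge (by norm_num : (0:ℝ) < 1/2)
                 (by norm_num : (1/2 : ℝ) ≤ 1) hq1
               rwa [Real.rpow_one] at this
           _ = ((1 / 2 : ℝ) * (∫ φ, G φ ∂ν)) ^ q⁻¹ :=
               (Real.mul_rpow (by norm_num) hIν).symm
           _ ≤ (∫ φ, G φ ∂ν') ^ q⁻¹ :=
               Real.rpow_le_rpow (mul_nonneg (by norm_num) hIν) h1 (inv_nonneg.mpr hq0.le)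
       · rw [hpq1]
         have h2 : ∫ φ, G φ ∂ν' ≤ X.nrm f ^ q := by
           calc ∫ φ, G φ ∂ν' ≤ ∫ _, X.nrm f ^ q ∂ν' :=
                 integral_mono hint' (integrable_const _) hGbd
             _ = X.nrm f ^ q := by simp
         calc (∫ φ, G φ ∂ν') ^ q⁻¹ ≤ (X.nrm f ^ q) ^ q⁻¹ :=
               Real.rpow_le_rpow hI' h2 (inv_nonneg.mpr hq0.le)
           _ = X.nrm f := by
               rw [← Real.rpow_mul (X.nrm_nonneg f), mul_inv_cancel₀ hq0.ne', Real.rpow_one])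

end
end

section
/- Let 1 ≤ p_1 < q < ∞, 1 ≤ p_2 < q' (1/q + 1/q' = 1), and let r_1, r_2 be given by 1/r_1 = 1/p_1 − 1/q and 1/r_2 = 1/p_2 − 1/q'. Let X be a p_1-convex Banach function lattice and Y an order continuous p_2'-concave Banach function lattice with the Fatou property (1/p_2 + 1/p_2' = 1), both on σ-finite measure spaces, and let T : X → Y be a bounded linear operator. If there exists C > 0 such that for every finite sequence (x_k)_{k=1}^n in X, inf_{(α_k) ∈ B_{r_2}^n, α_k ≠ 0} ‖ ( ∑_{k=1}^n |T(x_k)/α_k|^{p_2'} )^{1/p_2'} ‖_Y ≤ C sup_{(β_k) ∈ B_{r_1}^n} ‖ ( ∑_{k=1}^n |β_k x_k|^{p_1} )^{1/p_1} ‖_X, then T is (p_1,p_2)-strongly (q,q')-concave. -/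
open MeasureTheory Filter

noncomputable section

section AuxLemmas

variable {Ω : Type} [MeasurableSpace Ω] {μ : Measure Ω}

lemma rpow_inv_sum_le {n : ℕ} {p : ℝ} (hp : 1 ≤ p) (a : Fin n → ℝ) (ha : ∀ k, 0 ≤ a k) :
    (∑ k, a k ^ p) ^ p⁻¹ ≤ ∑ k, a k := by
  have hp0 : (0:ℝ) < p := lt_of_lt_of_le one_pos hp
  have hpe : 1 + (p - 1) ≠ 0 := by intro h; rw [add_sub_cancel] at h; exact ne_of_gt hp0 h
  have hS : (0:ℝ) ≤ ∑ k, a k := Finset.sum_nonneg fun k _ => ha k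
  have key : ∑ k, a k ^ p ≤ (∑ k, a k) ^ p := by
    calc ∑ k, a k ^ p ≤ ∑ k, a k * (∑ j, a j) ^ (p - 1) := by
          apply Finset.sum_le_sum
          intro k _
          have : a k ^ p = a k * a k ^ (p - 1) := by
            rw [← Real.rpow_one_add' (ha k) hpe, add_sub_cancel]
          rw [this]
          exact mul_le_mul_of_nonneg_left
            (Real.rpow_le_rpow (ha k) (Finset.single_le_sum (fun j _ => ha j) (Finset.mem_univ k))
              (by linarith)) (ha k)
      _ = (∑ k, a k) * (∑ j, a j) ^ (p - 1) := by rw [← Finset.sum_mul]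
      _ = (∑ k, a k) ^ p := by
          rw [← Real.rpow_one_add' hS hpe, add_sub_cancel]
  calc (∑ k, a k ^ p) ^ p⁻¹ ≤ ((∑ k, a k) ^ p) ^ p⁻¹ :=
        Real.rpow_le_rpow (Finset.sum_nonneg fun k _ => Real.rpow_nonneg (ha k) p) key
          (inv_nonneg.mpr hp0.le)
    _ = ∑ k, a k := Real.rpow_rpow_inv hS (ne_of_gt hp0)

lemma coeFn_finset_sum {ι : Type} (s : Finset ι) (z : ι → (Ω →ₘ[μ] ℝ)) :
    ⇑(∑ k ∈ s, z k) =ᵐ[μ] fun ω => ∑ k ∈ s, z k ω := by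
  classical
  induction s using Finset.induction with
  | empty => exact AEEqFun.coeFn_zero
  | insert _ _ hk ih =>
      rw [Finset.sum_insert hk]
      filter_upwards [AEEqFun.coeFn_add _ (∑ k ∈ _, z k), ih] with ω h1 h2
      rw [h1, Pi.add_apply, h2]; rw [Finset.sum_insert hk]

lemma ae_le_of_le {f g : Ω →ₘ[μ] ℝ} (h : f ≤ g) : ∀ᵐ ω ∂μ, f ω ≤ g ω :=
  AEEqFun.coeFn_le.mpr h

lemma le_of_ae_le {f g : Ω →ₘ[μ] ℝ} (h : ∀ᵐ ω ∂μ, f ω ≤ g ω) : f ≤ g :=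
  AEEqFun.coeFn_le.mp h

lemma abs_le_of_ae {f g : Ω →ₘ[μ] ℝ} (h : ∀ᵐ ω ∂μ, |f ω| ≤ |g ω|) : |f| ≤ |g| := by
  rw [← AEEqFun.coeFn_le]
  filter_upwards [AEEqFun.coeFn_abs f, AEEqFun.coeFn_abs g, h] with ω h1 h2 h3
  rw [h1, h2]; exact h3

lemma BFL.nrm_zero (X : BFL Ω μ) : X.nrm 0 = 0 := by
  have := X.nrm_smul 0 0 X.zero_mem
  simpa using this

lemma BFL.mem_of_ae_le (X : BFL Ω μ) {f g : Ω →ₘ[μ] ℝ} (hg : X.mem g)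
    (h : ∀ᵐ ω ∂μ, |f ω| ≤ |g ω|) : X.mem f :=
  X.ideal f g hg (abs_le_of_ae h)

lemma BFL.nrm_le_of_ae (X : BFL Ω μ) {f g : Ω →ₘ[μ] ℝ} (hg : X.mem g)
    (h : ∀ᵐ ω ∂μ, |f ω| ≤ |g ω|) : X.nrm f ≤ X.nrm g :=
  X.nrm_mono f g hg (abs_le_of_ae h)

lemma BFL.mem_finset_sum (X : BFL Ω μ) {ι : Type} (s : Finset ι) (z : ι → (Ω →ₘ[μ] ℝ))
    (hz : ∀ k, X.mem (z k)) : X.mem (∑ k ∈ s, z k) := by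
  classical
  induction s using Finset.induction with
  | empty => simpa using X.zero_mem
  | insert _ _ hk ih => rw [Finset.sum_insert hk]; exact X.add_mem _ _ (hz _) ih

lemma BFL.nrm_finset_sum_le (X : BFL Ω μ) {ι : Type} (s : Finset ι) (z : ι → (Ω →ₘ[μ] ℝ))
    (hz : ∀ k, X.mem (z k)) : X.nrm (∑ k ∈ s, z k) ≤ ∑ k ∈ s, X.nrm (z k) := by
  classical
  induction s using Finset.induction with
  | empty => simpa using le_of_eq (X.nrm_zero)
  | insert _ _ hk ih =>
      rw [Finset.sum_insert hk, Finset.sum_insert hk]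
      exact le_trans (X.nrm_triangle _ _ (hz _) (X.mem_finset_sum _ _ hz)) (by linarith)

lemma abs_coeFn_abs_le (f : Ω →ₘ[μ] ℝ) : ∀ᵐ ω ∂μ, |(|f| : Ω →ₘ[μ] ℝ) ω| ≤ |f ω| := by
  filter_upwards [AEEqFun.coeFn_abs f] with ω h
  rw [h, abs_abs]

lemma BFL.mem_abs (X : BFL Ω μ) {f : Ω →ₘ[μ] ℝ} (hf : X.mem f) : X.mem |f| :=
  X.mem_of_ae_le hf (abs_coeFn_abs_le f)

lemma BFL.nrm_abs_le (X : BFL Ω μ) {f : Ω →ₘ[μ] ℝ} (hf : X.mem f) : X.nrm |f| ≤ X.nrm f :=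
  X.nrm_le_of_ae hf (abs_coeFn_abs_le f)

lemma pSum_coeFn_smul (p : ℝ) {n : ℕ} (c : Fin n → ℝ) (z : Fin n → (Ω →ₘ[μ] ℝ)) :
    ⇑(pSum p fun k => c k • z k) =ᵐ[μ] fun ω => (∑ k, |c k * z k ω| ^ p) ^ p⁻¹ := by
  have h1 : ⇑(pSum p fun k => c k • z k) =ᵐ[μ]
      fun ω => (∑ k, |(c k • z k) ω| ^ p) ^ p⁻¹ := AEEqFun.coeFn_mk _ _
  have h2 : ∀ᵐ ω ∂μ, ∀ k, (c k • z k) ω = c k * z k ω :=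
    ae_all_iff.2 fun k => AEEqFun.coeFn_smul (c k) (z k)
  filter_upwards [h1, h2] with ω h1 h2
  rw [h1]
  congr 1
  exact Finset.sum_congr rfl fun k _ => by rw [h2 k]

lemma integrable_mul_of_kMem {Y : BFL Ω μ} {h g : Ω →ₘ[μ] ℝ}
    (hh : kMem Y.mem h) (hg : Y.mem g) : Integrable (fun ω => g ω * h ω) μ := by
  refine ⟨(g.measurable.mul h.measurable).aestronglyMeasurable, ?_⟩
  rw [hasFiniteIntegral_iff_norm]
  have : ∀ ω, ENNReal.ofReal ‖g ω * h ω‖ = ENNReal.ofReal |g ω * h ω| := by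
    intro ω; rw [Real.norm_eq_abs]
  simp_rw [this]
  exact hh g hg

lemma integrable_abs_mul_of_kMem {Y : BFL Ω μ} {h g : Ω →ₘ[μ] ℝ}
    (hh : kMem Y.mem h) (hg : Y.mem g) : Integrable (fun ω => |g ω * h ω|) μ := by
  refine ⟨((g.measurable.mul h.measurable).abs).aestronglyMeasurable, ?_⟩
  rw [hasFiniteIntegral_iff_norm]
  have : ∀ ω, ENNReal.ofReal ‖|g ω * h ω|‖ = ENNReal.ofReal |g ω * h ω| := by
    intro ω; rw [Real.norm_eq_abs, abs_abs]
  simp_rw [this]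
  exact hh g hg

lemma koethe_bdd (Y : BFL Ω μ) (hYF : Y.Fatou) (h : Ω →ₘ[μ] ℝ) (hh : kMem Y.mem h) :
    BddAbove (Set.range fun f : {f : Ω →ₘ[μ] ℝ // Y.mem f ∧ Y.nrm f ≤ 1} =>
      ∫ ω, |f.1 ω * h ω| ∂μ) := by
  by_contra hb
  have H : ∀ M : ℝ, ∃ f : {f : Ω →ₘ[μ] ℝ // Y.mem f ∧ Y.nrm f ≤ 1},
      M < ∫ ω, |f.1 ω * h ω| ∂μ := by
    intro M
    rcases not_bddAbove_iff.mp hb M with ⟨v, ⟨f, rfl⟩, hf⟩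
    exact ⟨f, hf⟩
  choose f hf using fun m : ℕ => H (4 ^ m)
  -- the partial sums
  set g0 : ℕ → (Ω →ₘ[μ] ℝ) := fun m => |(f m).1| with hg0
  have memg0 : ∀ m, Y.mem (g0 m) := fun m => Y.mem_abs (f m).2.1
  have nrmg0 : ∀ m, Y.nrm (g0 m) ≤ 1 := fun m => le_trans (Y.nrm_abs_le (f m).2.1) (f m).2.2
  set S : ℕ → (Ω →ₘ[μ] ℝ) := fun m => ∑ j ∈ Finset.range (m+1), (2⁻¹ : ℝ) ^ j • g0 j with hSdef
  have memS : ∀ m, Y.mem (S m) :=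
    fun m => Y.mem_finset_sum _ _ fun j => Y.smul_mem _ _ (memg0 j)
  have nrmS : ∀ m, Y.nrm (S m) ≤ 2 := by
    intro m
    refine le_trans (Y.nrm_finset_sum_le _ _ fun j => Y.smul_mem _ _ (memg0 j)) ?_
    refine le_trans (Finset.sum_le_sum fun j _ => ?_) (sum_geometric_two_le (m+1))
    rw [Y.nrm_smul _ _ (memg0 j), abs_pow, abs_inv, abs_two, one_div]
    calc (2:ℝ)⁻¹ ^ j * Y.nrm (g0 j) ≤ (2:ℝ)⁻¹ ^ j * 1 :=
          mul_le_mul_of_nonneg_left (nrmg0 j) (by positivity)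
      _ = (2⁻¹:ℝ) ^ j := mul_one _
  -- pointwise representatives
  set s : ℕ → Ω → ℝ := fun m ω => ∑ j ∈ Finset.range (m+1), (2⁻¹ : ℝ) ^ j * |(f j).1 ω|
    with hsdef
  have smeas : ∀ m, Measurable (s m) := fun m =>
    Finset.measurable_sum _ fun j _ => (measurable_const.mul (f j).1.measurable.abs)
  have hSfn : ∀ m, ⇑(S m) =ᵐ[μ] s m := by
    intro m
    have h1 := coeFn_finset_sum (Finset.range (m+1)) (fun j => (2⁻¹ : ℝ) ^ j • g0 j)
    have h2 : ∀ᵐ ω ∂μ, ∀ j, ((2⁻¹ : ℝ) ^ j • g0 j) ω = (2⁻¹:ℝ) ^ j * (g0 j) ω :=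
      ae_all_iff.2 fun j => AEEqFun.coeFn_smul _ _
    have h3 : ∀ᵐ ω ∂μ, ∀ j, (g0 j) ω = |(f j).1 ω| :=
      ae_all_iff.2 fun j => AEEqFun.coeFn_abs _
    filter_upwards [h1, h2, h3] with ω h1 h2 h3
    rw [h1]
    exact Finset.sum_congr rfl fun j _ => by rw [h2 j, h3 j]
  have hs_nonneg : ∀ m ω, 0 ≤ s m ω :=
    fun m ω => Finset.sum_nonneg fun j _ => by positivity
  have hs_mono : ∀ m ω, s m ω ≤ s (m+1) ω := by
    intro m ω
    refine Finset.sum_le_sum_of_subset_of_nonneg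
      (Finset.range_subset_range.2 (by omega)) fun j _ _ => by positivity
  set u : Ω → ENNReal := fun ω => ⨆ m, ENNReal.ofReal (s m ω) with hudef
  have umeas : Measurable u := Measurable.iSup fun m => (smeas m).ennreal_ofReal
  set A : Set Ω := {ω | u ω = ⊤} with hAdef
  have Ameas : MeasurableSet A := umeas (measurableSet_singleton ⊤)
  set χ : Ω →ₘ[μ] ℝ := AEEqFun.mk (A.indicator fun _ => (1:ℝ))
    ((measurable_one.indicator Ameas).aestronglyMeasurable) with hχdef
  have hχfn : ⇑χ =ᵐ[μ] A.indicator fun _ => (1:ℝ) := AEEqFun.coeFn_mk _ _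
  -- Step 1 : μ A = 0
  have hkey : ∀ m : ℕ, Y.mem χ ∧ Y.nrm χ ≤ 2 / ((m:ℝ)+1) := by
    intro m
    set c : ℝ := (m:ℝ) + 1 with hcdef
    have hc0 : (0:ℝ) < c := by positivity
    set w : ℕ → (Ω →ₘ[μ] ℝ) := fun n => AEEqFun.mk (fun ω => min (s n ω) c)
      (((smeas n).min measurable_const).aestronglyMeasurable) with hwdef
    have hwfn : ∀ n, ⇑(w n) =ᵐ[μ] fun ω => min (s n ω) c := fun n => AEEqFun.coeFn_mk _ _
    have hwle : ∀ n, ∀ᵐ ω ∂μ, |w n ω| ≤ |S n ω| := by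
      intro n
      filter_upwards [hwfn n, hSfn n] with ω h1 h2
      rw [h1, h2, abs_of_nonneg (le_min (hs_nonneg n ω) hc0.le), abs_of_nonneg (hs_nonneg n ω)]
      exact min_le_left _ _
    have memw : ∀ n, Y.mem (w n) := fun n => Y.mem_of_ae_le (memS n) (hwle n)
    have nrmw : ∀ n, Y.nrm (w n) ≤ 2 :=
      fun n => le_trans (Y.nrm_le_of_ae (memS n) (hwle n)) (nrmS n)
    have hw0 : ∀ n, 0 ≤ w n := by
      intro n
      refine le_of_ae_le ?_
      filter_upwards [hwfn n, AEEqFun.coeFn_zero (β := ℝ) (μ := μ)] with ω h1 h0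
      rw [h1, h0]
      exact le_min (hs_nonneg n ω) hc0.le
    have hwmono : Monotone w := by
      apply monotone_nat_of_le_succ
      intro n
      refine le_of_ae_le ?_
      filter_upwards [hwfn n, hwfn (n+1)] with ω h1 h2
      rw [h1, h2]
      exact min_le_min (hs_mono n ω) le_rfl
    set gm : Ω →ₘ[μ] ℝ := AEEqFun.mk (fun ω => (min (u ω) (ENNReal.ofReal c)).toReal)
      ((ENNReal.measurable_toReal.comp (umeas.min measurable_const)).aestronglyMeasurable)
      with hgmdef
    have hgmfn : ⇑gm =ᵐ[μ] fun ω => (min (u ω) (ENNReal.ofReal c)).toReal :=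
      AEEqFun.coeFn_mk _ _
    have hub : ∀ n, w n ≤ gm := by
      intro n
      refine le_of_ae_le ?_
      filter_upwards [hwfn n, hgmfn] with ω h1 h2
      rw [h1, h2]
      have e1 : ENNReal.ofReal (min (s n ω) c) ≤ min (u ω) (ENNReal.ofReal c) :=
        le_min (le_trans (ENNReal.ofReal_le_ofReal (min_le_left _ _))
            (le_iSup (fun j => ENNReal.ofReal (s j ω)) n))
          (ENNReal.ofReal_le_ofReal (min_le_right _ _))
      calc min (s n ω) c = (ENNReal.ofReal (min (s n ω) c)).toReal :=
            (ENNReal.toReal_ofReal (le_min (hs_nonneg n ω) hc0.le)).symm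
        _ ≤ _ := ENNReal.toReal_mono
            (ne_top_of_le_ne_top ENNReal.ofReal_ne_top (min_le_right _ _)) e1
    have hlub : ∀ h', (∀ n, w n ≤ h') → gm ≤ h' := by
      intro h' hh'
      refine le_of_ae_le ?_
      have h2 : ∀ᵐ ω ∂μ, ∀ n, (w n) ω ≤ h' ω := ae_all_iff.2 fun n => ae_le_of_le (hh' n)
      have h3 : ∀ᵐ ω ∂μ, ∀ n, (w n) ω = min (s n ω) c := ae_all_iff.2 hwfn
      filter_upwards [hgmfn, h2, h3] with ω h1 h2 h3
      rw [h1]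
      have hpos : 0 ≤ h' ω :=
        le_trans (le_min (hs_nonneg 0 ω) hc0.le) (by rw [← h3 0]; exact h2 0)
      have e1 : min (u ω) (ENNReal.ofReal c) ≤ ENNReal.ofReal (h' ω) := by
        rw [hudef]
        simp only []
        rw [iSup_inf_eq]
        refine iSup_le fun j => ?_
        have e2 : ENNReal.ofReal (s j ω) ⊓ ENNReal.ofReal c = ENNReal.ofReal (min (s j ω) c) := by
          rcases le_total (s j ω) c with hle | hle
          · rw [min_eq_left hle, min_eq_left (ENNReal.ofReal_le_ofReal hle)]
          · rw [min_eq_right hle, min_eq_right (ENNReal.ofReal_le_ofReal hle)]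
        rw [e2]
        exact ENNReal.ofReal_le_ofReal (by rw [← h3 j]; exact h2 j)
      calc (min (u ω) (ENNReal.ofReal c)).toReal ≤ (ENNReal.ofReal (h' ω)).toReal :=
            ENNReal.toReal_mono ENNReal.ofReal_ne_top e1
        _ = h' ω := ENNReal.toReal_ofReal hpos
    obtain ⟨memgm, htend⟩ := hYF w gm memw hw0 hwmono hub hlub
      ⟨2, by rintro v ⟨n, rfl⟩; exact nrmw n⟩
    have nrmgm : Y.nrm gm ≤ 2 := le_of_tendsto htend (Eventually.of_forall nrmw)
    have hχle : ∀ᵐ ω ∂μ, |χ ω| ≤ |(c⁻¹ • gm) ω| := by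
      filter_upwards [hχfn, AEEqFun.coeFn_smul c⁻¹ gm, hgmfn] with ω h1 h2 h3
      rw [h1, h2, Pi.smul_apply, smul_eq_mul, h3]
      by_cases hω : ω ∈ A
      · rw [Set.indicator_of_mem hω]
        have hu : u ω = ⊤ := hω
        rw [hu, min_eq_right le_top, ENNReal.toReal_ofReal hc0.le,
          inv_mul_cancel₀ (ne_of_gt hc0)]
      · rw [Set.indicator_of_notMem hω]
        simp [abs_nonneg]
        exact mul_nonneg (by positivity) ENNReal.toReal_nonneg
    refine ⟨Y.mem_of_ae_le (Y.smul_mem _ _ memgm) hχle, ?_⟩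
    refine le_trans (Y.nrm_le_of_ae (Y.smul_mem _ _ memgm) hχle) ?_
    rw [Y.nrm_smul _ _ memgm, abs_inv, abs_of_nonneg hc0.le, div_eq_mul_inv,
      mul_comm (c⁻¹)]
    exact mul_le_mul_of_nonneg_right nrmgm (by positivity)
  have nrmχ0 : Y.nrm χ = 0 := by
    refine le_antisymm ?_ (Y.nrm_nonneg χ)
    have ht : Tendsto (fun m : ℕ => 2 / ((m:ℝ)+1)) atTop (nhds 0) := by
      have h2 := tendsto_one_div_add_atTop_nhds_zero_nat.const_mul (2:ℝ)
      simpa [div_eq_mul_inv, one_div, mul_comm, mul_assoc] using h2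
    exact ge_of_tendsto ht (Eventually.of_forall fun m => (hkey m).2)
  have hχ0 : χ = 0 := Y.nrm_eq_zero χ (hkey 0).1 nrmχ0
  have hA0 : μ A = 0 := by
    have hind : ∀ᵐ ω ∂μ, A.indicator (fun _ => (1:ℝ)) ω = 0 := by
      have h2 : ⇑χ =ᵐ[μ] (0 : Ω → ℝ) := by
        rw [hχ0]; exact AEEqFun.coeFn_zero
      filter_upwards [hχfn, h2] with ω e1 e2
      rw [← e1, e2, Pi.zero_apply]
    refine measure_mono_null (fun ω hω => ?_) (ae_iff.1 hind)
    simp only [Set.mem_setOf_eq]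
    rw [Set.indicator_of_mem hω]
    norm_num
  -- Step 2 : contradiction
  have huae : ∀ᵐ ω ∂μ, u ω ≠ ⊤ := by
    rw [ae_iff]
    simpa [hAdef] using hA0
  set g : Ω →ₘ[μ] ℝ := AEEqFun.mk (fun ω => (u ω).toReal)
    ((ENNReal.measurable_toReal.comp umeas).aestronglyMeasurable) with hgdef
  have hgfn : ⇑g =ᵐ[μ] fun ω => (u ω).toReal := AEEqFun.coeFn_mk _ _
  have hSmono : Monotone S := by
    apply monotone_nat_of_le_succ
    intro n
    refine le_of_ae_le ?_
    filter_upwards [hSfn n, hSfn (n+1)] with ω h1 h2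
    rw [h1, h2]
    exact hs_mono n ω
  have hS0 : ∀ n, 0 ≤ S n := by
    intro n
    refine le_of_ae_le ?_
    filter_upwards [hSfn n, AEEqFun.coeFn_zero (β := ℝ) (μ := μ)] with ω h1 h2
    rw [h1, h2]
    exact hs_nonneg n ω
  have hub : ∀ n, S n ≤ g := by
    intro n
    refine le_of_ae_le ?_
    filter_upwards [hSfn n, hgfn, huae] with ω h1 h2 h3
    rw [h1, h2]
    calc s n ω = (ENNReal.ofReal (s n ω)).toReal :=
          (ENNReal.toReal_ofReal (hs_nonneg n ω)).symm
      _ ≤ (u ω).toReal := ENNReal.toReal_mono h3 (le_iSup (fun j => ENNReal.ofReal (s j ω)) n)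
  have hlub : ∀ h', (∀ n, S n ≤ h') → g ≤ h' := by
    intro h' hh'
    refine le_of_ae_le ?_
    have h2 : ∀ᵐ ω ∂μ, ∀ n, (S n) ω ≤ h' ω := ae_all_iff.2 fun n => ae_le_of_le (hh' n)
    have h3 : ∀ᵐ ω ∂μ, ∀ n, (S n) ω = s n ω := ae_all_iff.2 hSfn
    filter_upwards [hgfn, h2, h3] with ω h1 h2 h3
    rw [h1]
    have hpos : 0 ≤ h' ω := le_trans (hs_nonneg 0 ω) (by rw [← h3 0]; exact h2 0)
    have e1 : u ω ≤ ENNReal.ofReal (h' ω) :=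
      iSup_le fun n => ENNReal.ofReal_le_ofReal (by rw [← h3 n]; exact h2 n)
    calc (u ω).toReal ≤ (ENNReal.ofReal (h' ω)).toReal :=
          ENNReal.toReal_mono ENNReal.ofReal_ne_top e1
      _ = h' ω := ENNReal.toReal_ofReal hpos
  obtain ⟨memg, -⟩ := hYF S g memS hS0 hSmono hub hlub ⟨2, by rintro v ⟨n, rfl⟩; exact nrmS n⟩
  have hfin := hh g memg
  have hlow : ∀ n : ℕ, ENNReal.ofReal ((2:ℝ)^n) ≤ ∫⁻ ω, ENNReal.ofReal |g ω * h ω| ∂μ := by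
    intro n
    have hintf : Integrable (fun ω => |(f n).1 ω * h ω|) μ :=
      integrable_abs_mul_of_kMem hh (f n).2.1
    have e0 : ENNReal.ofReal ((4:ℝ)^n) ≤ ∫⁻ ω, ENNReal.ofReal |(f n).1 ω * h ω| ∂μ := by
      rw [← ofReal_integral_eq_lintegral_ofReal hintf
        (Eventually.of_forall fun ω => abs_nonneg _)]
      exact ENNReal.ofReal_le_ofReal (hf n).le
    have e2 : ∀ᵐ ω ∂μ, ENNReal.ofReal ((2⁻¹:ℝ)^n) * ENNReal.ofReal |(f n).1 ω * h ω| ≤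
        ENNReal.ofReal |g ω * h ω| := by
      filter_upwards [hgfn, huae] with ω h1 h3
      rw [← ENNReal.ofReal_mul (by positivity)]
      apply ENNReal.ofReal_le_ofReal
      have hsn : (2⁻¹:ℝ)^n * |(f n).1 ω| ≤ s n ω :=
        Finset.single_le_sum (f := fun j => (2⁻¹:ℝ)^j * |(f j).1 ω|)
          (fun j _ => by positivity) (Finset.self_mem_range_succ n)
      have hgpos : 0 ≤ g ω := by rw [h1]; exact ENNReal.toReal_nonneg
      have hsg : s n ω ≤ g ω := by
        rw [h1]
        calc s n ω = (ENNReal.ofReal (s n ω)).toReal :=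
              (ENNReal.toReal_ofReal (hs_nonneg n ω)).symm
          _ ≤ (u ω).toReal :=
              ENNReal.toReal_mono h3 (le_iSup (fun j => ENNReal.ofReal (s j ω)) n)
      calc (2⁻¹:ℝ)^n * |(f n).1 ω * h ω| = ((2⁻¹:ℝ)^n * |(f n).1 ω|) * |h ω| := by
            rw [abs_mul]; ring
        _ ≤ g ω * |h ω| := mul_le_mul_of_nonneg_right (le_trans hsn hsg) (abs_nonneg _)
        _ = |g ω * h ω| := by rw [abs_mul, abs_of_nonneg hgpos]
    have e3 : ENNReal.ofReal ((2⁻¹:ℝ)^n) * ∫⁻ ω, ENNReal.ofReal |(f n).1 ω * h ω| ∂μ ≤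
        ∫⁻ ω, ENNReal.ofReal |g ω * h ω| ∂μ := by
      rw [← lintegral_const_mul' _ _ ENNReal.ofReal_ne_top]
      exact lintegral_mono_ae e2
    calc ENNReal.ofReal ((2:ℝ)^n)
        = ENNReal.ofReal ((2⁻¹:ℝ)^n) * ENNReal.ofReal ((4:ℝ)^n) := by
          rw [← ENNReal.ofReal_mul (by positivity), ← mul_pow]; norm_num
      _ ≤ ENNReal.ofReal ((2⁻¹:ℝ)^n) * ∫⁻ ω, ENNReal.ofReal |(f n).1 ω * h ω| ∂μ :=
          mul_le_mul_right e0 _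
      _ ≤ _ := e3
  obtain ⟨n, hn⟩ := exists_nat_gt ((∫⁻ ω, ENNReal.ofReal |g ω * h ω| ∂μ).toReal)
  have h2n : ((∫⁻ ω, ENNReal.ofReal |g ω * h ω| ∂μ).toReal) < (2:ℝ)^n := by
    calc _ < (n:ℝ) := hn
      _ ≤ (2:ℝ)^n := by exact_mod_cast (Nat.lt_two_pow_self (n := n)).le
  have hcontr := (ENNReal.ofReal_le_iff_le_toReal (ne_of_lt hfin)).1 (hlow n)
  linarith

end AuxLemmas

/-- Corollary `otrafor`: let `1 ≤ p₁ < q`, `1 ≤ p₂ < q'` with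
`1/q + 1/q' = 1`, `1/p₂ + 1/p₂' = 1`, `X` a `p₁`-convex Banach function lattice and `Y` an
order continuous `p₂'`-concave Banach function lattice with the Fatou property. If
`inf_{α ∈ B_{r₂}, αₖ ≠ 0} ‖(∑ |T xₖ / αₖ|^{p₂'})^{1/p₂'}‖_Y ≤
  C sup_{β ∈ B_{r₁}} ‖(∑ |βₖ xₖ|^{p₁})^{1/p₁}‖_X`
for all finite sequences, then `T` is `(p₁,p₂)`-strongly `(q,q')`-concave. -/
theorem statement8 {Ω₁ Ω₂ : Type} [MeasurableSpace Ω₁] [MeasurableSpace Ω₂]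
    (μ₁ : Measure Ω₁) (μ₂ : Measure Ω₂) [SigmaFinite μ₁] [SigmaFinite μ₂]
    (X : BFL Ω₁ μ₁) (Y : BFL Ω₂ μ₂)
    (p₁ p₂ q q' p₂' : ℝ)
    (hp₁ : 1 ≤ p₁) (hp₁q : p₁ < q) (hp₂ : 1 ≤ p₂) (hp₂q : p₂ < q')
    (hq : 1 / q + 1 / q' = 1) (hp₂conj : 1 / p₂ + 1 / p₂' = 1)
    (hX : ∃ C, X.pConvex p₁ C) (hYconc : ∃ C, Y.pConcave p₂' C)
    (hYoc : Y.OrderCont) (hYF : Y.Fatou)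
    (T : (Ω₁ →ₘ[μ₁] ℝ) → (Ω₂ →ₘ[μ₂] ℝ)) (hT : IsBddOp X Y T)
    (C : ℝ) (hC : 0 < C)
    (hdom : ∀ (n : ℕ) (x : Fin n → (Ω₁ →ₘ[μ₁] ℝ)), (∀ k, X.mem (x k)) →
      (⨅ α : {α : Fin n → ℝ // α ∈ strongBall p₂ q' n ∧ ∀ k, α k ≠ 0},
        Y.nrm (pSum p₂' fun k => (α.1 k)⁻¹ • T (x k))) ≤
      C * strongSup X.nrm p₁ q x) :
    ∃ C' > 0, StrongPair X Y p₁ q p₂ q' T C' := by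
  classical
  have hTmem : ∀ f, X.mem f → Y.mem (T f) := hT.1
  have hp₁0 : p₁ ≠ 0 := ne_of_gt (lt_of_lt_of_le one_pos hp₁)
  refine ⟨C, hC, ?_⟩
  intro n x y hx hy
  rcases eq_or_lt_of_le hp₂ with hp2eq | hp2gt
  · -- degenerate case p₂ = 1, p₂' = 0 : the hypotheses are contradictory
    exfalso
    have hp₂'0 : p₂' = 0 := by
      rw [← hp2eq] at hp₂conj
      norm_num at hp₂conj
      exact hp₂conj
    subst hp₂'0
    obtain ⟨C₂, hC₂⟩ := hYconc
    have hball1 : (fun _ : Fin 1 => (1:ℝ)) ∈ strongBall p₂ q' 1 := by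
      unfold strongBall
      rw [Set.mem_setOf_eq, if_neg (ne_of_lt hp₂q)]
      simp [Real.one_rpow]
    have hdom1 := hdom 1 (fun _ => 0) (fun _ => X.zero_mem)
    have hsup0 : strongSup X.nrm p₁ q (fun _ : Fin 1 => (0:Ω₁ →ₘ[μ₁] ℝ)) = 0 := by
      have hz : ∀ β : strongBall p₁ q 1,
          X.nrm (pSum p₁ fun k : Fin 1 => β.1 k • (0:Ω₁ →ₘ[μ₁] ℝ)) = 0 := by
        intro β
        have hzz : (pSum p₁ fun k : Fin 1 => β.1 k • (0:Ω₁ →ₘ[μ₁] ℝ)) = 0 := by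
          refine AEEqFun.ext ?_
          filter_upwards [pSum_coeFn_smul p₁ β.1 (fun _ : Fin 1 => (0:Ω₁ →ₘ[μ₁] ℝ)),
            AEEqFun.coeFn_zero (β := ℝ) (μ := μ₁)] with ω e1 e2
          rw [e1, e2]
          simp [Real.zero_rpow hp₁0, Real.zero_rpow (inv_ne_zero hp₁0)]
        rw [hzz, X.nrm_zero]
      exact le_antisymm (Real.iSup_le (fun β => le_of_eq (hz β)) le_rfl)
        (Real.iSup_nonneg fun β => X.nrm_nonneg _)
    rw [hsup0, mul_zero] at hdom1
    have hconstP : ∀ (nn : ℕ) (z : Fin nn → (Ω₂ →ₘ[μ₂] ℝ)),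
        pSum (0:ℝ) z = pSum (0:ℝ) (fun _ : Fin 0 => (0 : Ω₂ →ₘ[μ₂] ℝ)) := by
      intro nn z
      refine AEEqFun.ext ?_
      have e1 : ⇑(pSum (0:ℝ) z) =ᵐ[μ₂]
          fun ω => (∑ k, |z k ω| ^ (0:ℝ)) ^ (0:ℝ)⁻¹ := AEEqFun.coeFn_mk _ _
      have e2 : ⇑(pSum (0:ℝ) (fun _ : Fin 0 => (0 : Ω₂ →ₘ[μ₂] ℝ))) =ᵐ[μ₂]
          fun ω => (∑ k : Fin 0, |(0 : Ω₂ →ₘ[μ₂] ℝ) ω| ^ (0:ℝ)) ^ (0:ℝ)⁻¹ :=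
        AEEqFun.coeFn_mk _ _
      filter_upwards [e1, e2] with ω e1 e2
      rw [e1, e2]
      simp
    have hVle : Y.nrm (pSum (0:ℝ) (fun _ : Fin 0 => (0 : Ω₂ →ₘ[μ₂] ℝ))) ≤ 0 := by
      haveI hne1 : Nonempty {α : Fin 1 → ℝ // α ∈ strongBall p₂ q' 1 ∧ ∀ k, α k ≠ 0} :=
        ⟨⟨fun _ => 1, hball1, fun k => one_ne_zero⟩⟩
      have hrw : (⨅ α : {α : Fin 1 → ℝ // α ∈ strongBall p₂ q' 1 ∧ ∀ k, α k ≠ 0},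
          Y.nrm (pSum (0:ℝ) fun k => (α.1 k)⁻¹ • T ((fun _ : Fin 1 => (0:Ω₁ →ₘ[μ₁] ℝ)) k)))
          = Y.nrm (pSum (0:ℝ) (fun _ : Fin 0 => (0 : Ω₂ →ₘ[μ₂] ℝ))) := by
        rw [iInf_congr (fun α => congrArg Y.nrm (hconstP 1 _))]
        exact ciInf_const
      rw [hrw] at hdom1
      exact hdom1
    have h0 := hC₂ 0 (fun _ => 0) (fun _ => Y.zero_mem)
    rw [Finset.univ_eq_empty, Finset.sum_empty, inv_zero, Real.rpow_zero] at h0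
    have hV0 : Y.nrm (pSum (0:ℝ) (fun _ : Fin 0 => (0 : Ω₂ →ₘ[μ₂] ℝ))) = 0 :=
      le_antisymm hVle (Y.nrm_nonneg _)
    rw [hV0, mul_zero] at h0
    linarith
  · -- main case : 1 < p₂
    set S₁ := strongSup X.nrm p₁ q x with hS₁def
    set S₂ := strongSup (kNrm Y.mem Y.nrm) p₂ q' y with hS₂def
    have hS₁0 : 0 ≤ S₁ := Real.iSup_nonneg fun β => X.nrm_nonneg _
    have hS₂0 : 0 ≤ S₂ :=
      Real.iSup_nonneg fun β => Real.iSup_nonneg fun f => integral_nonneg fun ω => abs_nonneg _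
    -- facts about p₂'
    have hp₂pos : (0:ℝ) < p₂ := lt_trans one_pos hp2gt
    have h1p₂' : 1 / p₂' = 1 - 1 / p₂ := by linarith
    have hp₂'invpos : 0 < 1 / p₂' := by
      rw [h1p₂']
      have hlt : 1 / p₂ < 1 := by rw [div_lt_one hp₂pos]; exact hp2gt
      linarith
    have hp₂'pos : 0 < p₂' := by
      rcases lt_trichotomy p₂' 0 with hcc | hcc | hcc
      · exfalso
        have : 1 / p₂' < 0 := div_neg_of_pos_of_neg one_pos hcc
        linarith
      · exfalso; rw [hcc] at hp₂'invpos; norm_num at hp₂'invpos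
      · exact hcc
    have hp₂'gt1 : 1 < p₂' := by
      have h2 : 1 / p₂' < 1 := by
        have : 0 < 1 / p₂ := by positivity
        linarith
      rwa [div_lt_one hp₂'pos] at h2
    have hconj : Real.HolderConjugate p₂' p₂ := by
      rw [Real.holderConjugate_iff]
      constructor
      · exact hp₂'gt1
      · rw [← one_div, ← one_div]; linarith
    -- trivial case n = 0
    rcases Nat.eq_zero_or_pos n with hn0 | hnpos
    · subst hn0
      rw [Finset.univ_eq_empty, Finset.sum_empty, abs_zero]
      exact mul_nonneg hC.le (mul_nonneg hS₁0 hS₂0)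
    -- the ball facts
    have hdpos : 0 < 1 / p₂ - 1 / q' := by
      have := one_div_lt_one_div_of_lt hp₂pos hp₂q
      linarith
    have hmemball : ∀ β : Fin n → ℝ, β ∈ strongBall p₂ q' n → ∀ k, |β k| ≤ 1 := by
      intro β hβ k
      unfold strongBall at hβ
      rw [Set.mem_setOf_eq, if_neg (ne_of_lt hp₂q)] at hβ
      by_contra hgt
      push_neg at hgt
      have h1 : (1:ℝ) < |β k| ^ (1 / p₂ - 1 / q')⁻¹ := by
        rw [Real.one_lt_rpow_iff_of_pos (lt_trans one_pos hgt)]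
        exact Or.inl ⟨hgt, inv_pos.2 hdpos⟩
      have h2 : |β k| ^ (1 / p₂ - 1 / q')⁻¹ ≤ ∑ j, |β j| ^ (1 / p₂ - 1 / q')⁻¹ :=
        Finset.single_le_sum (fun j _ => Real.rpow_nonneg (abs_nonneg _) _) (Finset.mem_univ k)
      linarith
    haveI hne : Nonempty {α : Fin n → ℝ // α ∈ strongBall p₂ q' n ∧ ∀ k, α k ≠ 0} := by
      have hn0' : (0:ℝ) < (n:ℝ) := by exact_mod_cast hnpos
      have ht0 : (0:ℝ) < ((n:ℝ)⁻¹) ^ (1 / p₂ - 1 / q') :=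
        Real.rpow_pos_of_pos (by positivity) _
      refine ⟨⟨fun _ => ((n:ℝ)⁻¹) ^ (1 / p₂ - 1 / q'), ?_, fun k => ne_of_gt ht0⟩⟩
      unfold strongBall
      rw [Set.mem_setOf_eq, if_neg (ne_of_lt hp₂q)]
      have hval : ∀ k : Fin n, |((n:ℝ)⁻¹) ^ (1 / p₂ - 1 / q')| ^ (1 / p₂ - 1 / q')⁻¹
          = (n:ℝ)⁻¹ := by
        intro k
        rw [abs_of_pos ht0, Real.rpow_rpow_inv (by positivity) (ne_of_gt hdpos)]
      rw [Finset.sum_congr rfl fun k _ => hval k, Finset.sum_const, Finset.card_univ,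
        Fintype.card_fin, nsmul_eq_mul, mul_inv_cancel₀ (ne_of_gt hn0')]
    -- main estimate
    have hmain : ∀ ε : ℝ, 0 < ε →
        |∑ k, ∫ ω, (T (x k)) ω * (y k) ω ∂μ₂| ≤ (C * S₁ + ε) * S₂ := by
      intro ε hε
      obtain ⟨α, hα⟩ := exists_lt_of_ciInf_lt
        (lt_of_le_of_lt (hdom n x hx) (lt_add_of_pos_right (C * S₁) hε))
      set F := pSum p₂' fun k => (α.1 k)⁻¹ • T (x k) with hFdef
      set G := pSum p₂ fun k => α.1 k • y k with hGdef
      have hTmemk : ∀ k, Y.mem (T (x k)) := fun k => hTmem _ (hx k)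
      have hFfn : ⇑F =ᵐ[μ₂] fun ω => (∑ k, |(α.1 k)⁻¹ * (T (x k)) ω| ^ p₂') ^ p₂'⁻¹ :=
        pSum_coeFn_smul _ _ _
      have hGfn : ⇑G =ᵐ[μ₂] fun ω => (∑ k, |α.1 k * (y k) ω| ^ p₂) ^ p₂⁻¹ :=
        pSum_coeFn_smul _ _ _
      -- the dominator of F
      set Bf : Ω₂ →ₘ[μ₂] ℝ := ∑ k, |((α.1 k)⁻¹ • T (x k))| with hBfdef
      have hBffn : ⇑Bf =ᵐ[μ₂] fun ω => ∑ k, |(α.1 k)⁻¹ * (T (x k)) ω| := by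
        have h1 := coeFn_finset_sum Finset.univ (fun k : Fin n => |((α.1 k)⁻¹ • T (x k))|)
        have h2 : ∀ᵐ ω ∂μ₂, ∀ k : Fin n,
            (|((α.1 k)⁻¹ • T (x k))| : Ω₂ →ₘ[μ₂] ℝ) ω = |((α.1 k)⁻¹ • T (x k)) ω| :=
          ae_all_iff.2 fun k => AEEqFun.coeFn_abs _
        have h3 : ∀ᵐ ω ∂μ₂, ∀ k : Fin n,
            ((α.1 k)⁻¹ • T (x k)) ω = (α.1 k)⁻¹ * (T (x k)) ω :=
          ae_all_iff.2 fun k => AEEqFun.coeFn_smul _ _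
        filter_upwards [h1, h2, h3] with ω h1 h2 h3
        rw [h1]
        exact Finset.sum_congr rfl fun k _ => by rw [h2 k, h3 k]
      have memBf : Y.mem Bf :=
        Y.mem_finset_sum _ _ fun k => Y.mem_abs (Y.smul_mem _ _ (hTmemk k))
      have hFle : ∀ᵐ ω ∂μ₂, |F ω| ≤ |Bf ω| := by
        filter_upwards [hFfn, hBffn] with ω h1 h2
        rw [h1, h2]
        have hnn : ∀ k : Fin n, 0 ≤ |(α.1 k)⁻¹ * (T (x k)) ω| := fun k => abs_nonneg _
        rw [abs_of_nonneg (Real.rpow_nonneg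
            (Finset.sum_nonneg fun k _ => Real.rpow_nonneg (hnn k) _) _),
          abs_of_nonneg (Finset.sum_nonneg fun k _ => hnn k)]
        exact rpow_inv_sum_le hp₂'gt1.le _ hnn
      have memF : Y.mem F := Y.mem_of_ae_le memBf hFle
      have hFnn : ∀ᵐ ω ∂μ₂, 0 ≤ F ω := by
        filter_upwards [hFfn] with ω h1
        rw [h1]
        exact Real.rpow_nonneg
          (Finset.sum_nonneg fun k _ => Real.rpow_nonneg (abs_nonneg _) _) _
      have hGnn : ∀ᵐ ω ∂μ₂, 0 ≤ G ω := by
        filter_upwards [hGfn] with ω h1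
        rw [h1]
        exact Real.rpow_nonneg
          (Finset.sum_nonneg fun k _ => Real.rpow_nonneg (abs_nonneg _) _) _
      -- the dominator on the Köthe dual side
      set h₀ : Ω₂ →ₘ[μ₂] ℝ := ∑ j, |y j| with hh₀def
      have hh₀fn : ⇑h₀ =ᵐ[μ₂] fun ω => ∑ j, |(y j) ω| := by
        have h1 := coeFn_finset_sum Finset.univ (fun j : Fin n => |y j|)
        have h2 : ∀ᵐ ω ∂μ₂, ∀ j : Fin n, (|y j| : Ω₂ →ₘ[μ₂] ℝ) ω = |(y j) ω| :=
          ae_all_iff.2 fun j => AEEqFun.coeFn_abs _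
        filter_upwards [h1, h2] with ω h1 h2
        rw [h1]
        exact Finset.sum_congr rfl fun j _ => h2 j
      have hh₀k : kMem Y.mem h₀ := by
        intro f hf
        have e1 : ∀ᵐ ω ∂μ₂,
            ENNReal.ofReal |f ω * h₀ ω| = ∑ j, ENNReal.ofReal |f ω * (y j) ω| := by
          filter_upwards [hh₀fn] with ω h1
          have e2 : |f ω * h₀ ω| = ∑ j, |f ω * (y j) ω| := by
            rw [h1, abs_mul, abs_of_nonneg (Finset.sum_nonneg fun j _ => abs_nonneg ((y j) ω)),
              Finset.mul_sum]
            exact Finset.sum_congr rfl fun j _ => (abs_mul _ _).symm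
          rw [e2, ENNReal.ofReal_sum_of_nonneg fun j _ => abs_nonneg _]
        rw [lintegral_congr_ae e1, lintegral_finset_sum' _ (f := fun j ω => ENNReal.ofReal |f ω * (y j) ω|)
          (fun j _ => ((f.measurable.mul (y j).measurable).abs.ennreal_ofReal).aemeasurable)]
        exact ENNReal.sum_lt_top.2 fun j _ => hy j f hf
      -- the Köthe bound
      have hM := koethe_bdd Y hYF h₀ hh₀k
      set M := sSup (Set.range fun f : {f : Ω₂ →ₘ[μ₂] ℝ // Y.mem f ∧ Y.nrm f ≤ 1} =>
        ∫ ω, |f.1 ω * h₀ ω| ∂μ₂) with hMdef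
      have hMel : ∀ f : {f : Ω₂ →ₘ[μ₂] ℝ // Y.mem f ∧ Y.nrm f ≤ 1},
          ∫ ω, |f.1 ω * h₀ ω| ∂μ₂ ≤ M := fun f => le_csSup hM ⟨f, rfl⟩
      have hGen : ∀ (G' : Ω₂ →ₘ[μ₂] ℝ), (∀ᵐ ω ∂μ₂, |G' ω| ≤ h₀ ω) →
          ∀ f : {f : Ω₂ →ₘ[μ₂] ℝ // Y.mem f ∧ Y.nrm f ≤ 1},
          ∫ ω, |f.1 ω * G' ω| ∂μ₂ ≤ M := by
        intro G' hG' f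
        have hInth₀ : Integrable (fun ω => |f.1 ω * h₀ ω|) μ₂ :=
          integrable_abs_mul_of_kMem hh₀k f.2.1
        have hIntG' : Integrable (fun ω => |f.1 ω * G' ω|) μ₂ := by
          refine hInth₀.mono' ((f.1.measurable.mul G'.measurable).abs).aestronglyMeasurable ?_
          filter_upwards [hG'] with ω h1
          rw [Real.norm_eq_abs, abs_abs, abs_mul, abs_mul]
          exact mul_le_mul_of_nonneg_left (le_trans h1 (le_abs_self _)) (abs_nonneg _)
        refine le_trans (integral_mono_ae hIntG' hInth₀ ?_) (hMel f)
        filter_upwards [hG'] with ω h1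
        rw [abs_mul, abs_mul]
        exact mul_le_mul_of_nonneg_left (le_trans h1 (le_abs_self _)) (abs_nonneg _)
      -- every ball element of Y' dominated by h₀ has kNrm at most max M 0
      have hβdom : ∀ β : Fin n → ℝ, β ∈ strongBall p₂ q' n →
          ∀ᵐ ω ∂μ₂, |(pSum p₂ fun k => β k • y k) ω| ≤ h₀ ω := by
        intro β hβ
        filter_upwards [pSum_coeFn_smul p₂ β y, hh₀fn] with ω h1 h2
        rw [h1, h2, abs_of_nonneg (Real.rpow_nonneg
          (Finset.sum_nonneg fun k _ => Real.rpow_nonneg (abs_nonneg _) _) _)]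
        refine le_trans (rpow_inv_sum_le hp₂ _ fun k => abs_nonneg _) ?_
        refine Finset.sum_le_sum fun k _ => ?_
        rw [abs_mul]
        exact le_trans (mul_le_mul_of_nonneg_right (hmemball β hβ k) (abs_nonneg _))
          (le_of_eq (one_mul _))
      have hkNrm_le : ∀ (G' : Ω₂ →ₘ[μ₂] ℝ), (∀ᵐ ω ∂μ₂, |G' ω| ≤ h₀ ω) →
          kNrm Y.mem Y.nrm G' ≤ max M 0 := fun G' hG' =>
        Real.iSup_le (fun f => le_trans (hGen G' hG' f) (le_max_left _ _)) (le_max_right _ _)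
      have hS₂bdd : BddAbove (Set.range fun β : strongBall p₂ q' n =>
          kNrm Y.mem Y.nrm (pSum p₂ fun k => β.1 k • y k)) := by
        refine ⟨max M 0, ?_⟩
        rintro v ⟨β, rfl⟩
        exact hkNrm_le _ (hβdom β.1 β.2)
      have hGdom : ∀ᵐ ω ∂μ₂, |G ω| ≤ h₀ ω := hβdom α.1 α.2.1
      have hGS₂ : kNrm Y.mem Y.nrm G ≤ S₂ := le_ciSup hS₂bdd ⟨α.1, α.2.1⟩
      -- integrability
      have hTyInt : ∀ k j : Fin n, Integrable (fun ω => |(T (x k)) ω * (y j) ω|) μ₂ :=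
        fun k j => integrable_abs_mul_of_kMem (hy j) (hTmemk k)
      have hTyInt' : ∀ k : Fin n, Integrable (fun ω => (T (x k)) ω * (y k) ω) μ₂ :=
        fun k => integrable_mul_of_kMem (hy k) (hTmemk k)
      have hintFG : Integrable (fun ω => F ω * G ω) μ₂ := by
        have hBint : Integrable (fun ω =>
            (∑ k, |(α.1 k)⁻¹| * |(T (x k)) ω|) * (∑ j, |α.1 j| * |(y j) ω|)) μ₂ := by
          have hBeq : (fun ω => (∑ k, |(α.1 k)⁻¹| * |(T (x k)) ω|) *
              (∑ j, |α.1 j| * |(y j) ω|)) =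
              fun ω => ∑ k, ∑ j, (|(α.1 k)⁻¹| * |α.1 j|) * |(T (x k)) ω * (y j) ω| := by
            funext ω
            rw [Finset.sum_mul_sum]
            refine Finset.sum_congr rfl fun k _ => Finset.sum_congr rfl fun j _ => ?_
            rw [abs_mul]
            ring
          rw [hBeq]
          exact integrable_finset_sum _ fun k _ => integrable_finset_sum _
            fun j _ => ((hTyInt k j).const_mul _)
        refine hBint.mono' (F.aestronglyMeasurable.mul G.aestronglyMeasurable) ?_
        filter_upwards [hFfn, hGfn] with ω h1 h2
        rw [Real.norm_eq_abs, h1, h2]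
        have e1 : (∑ k, |(α.1 k)⁻¹ * (T (x k)) ω| ^ p₂') ^ p₂'⁻¹ ≤
            ∑ k, |(α.1 k)⁻¹| * |(T (x k)) ω| := by
          refine le_trans (rpow_inv_sum_le hp₂'gt1.le _ fun k => abs_nonneg _) ?_
          exact le_of_eq (Finset.sum_congr rfl fun k _ => abs_mul _ _)
        have e2 : (∑ k, |α.1 k * (y k) ω| ^ p₂) ^ p₂⁻¹ ≤ ∑ j, |α.1 j| * |(y j) ω| := by
          refine le_trans (rpow_inv_sum_le hp₂ _ fun k => abs_nonneg _) ?_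
          exact le_of_eq (Finset.sum_congr rfl fun k _ => abs_mul _ _)
        have e3 : (0:ℝ) ≤ (∑ k, |(α.1 k)⁻¹ * (T (x k)) ω| ^ p₂') ^ p₂'⁻¹ :=
          Real.rpow_nonneg (Finset.sum_nonneg fun k _ => Real.rpow_nonneg (abs_nonneg _) _) _
        have e4 : (0:ℝ) ≤ (∑ k, |α.1 k * (y k) ω| ^ p₂) ^ p₂⁻¹ :=
          Real.rpow_nonneg (Finset.sum_nonneg fun k _ => Real.rpow_nonneg (abs_nonneg _) _) _
        rw [abs_of_nonneg (mul_nonneg e3 e4)]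
        exact mul_le_mul e1 e2 e4 (Finset.sum_nonneg fun k _ =>
          mul_nonneg (abs_nonneg _) (abs_nonneg _))
      -- pointwise Hölder
      have hHold : ∀ᵐ ω ∂μ₂, ∑ k, |(T (x k)) ω * (y k) ω| ≤ F ω * G ω := by
        filter_upwards [hFfn, hGfn] with ω h1 h2
        rw [h1, h2]
        have key := Real.inner_le_Lp_mul_Lq_of_nonneg (Finset.univ (α := Fin n)) hconj
          (f := fun k => |(α.1 k)⁻¹ * (T (x k)) ω|) (g := fun k => |α.1 k * (y k) ω|)
          (fun k _ => abs_nonneg _) (fun k _ => abs_nonneg _)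
        rw [one_div, one_div] at key
        refine le_trans (le_of_eq (Finset.sum_congr rfl fun k _ => ?_)) key
        rw [← abs_mul]
        congr 1
        rw [mul_mul_mul_comm, inv_mul_cancel₀ (α.2.2 k), one_mul]
      -- the chain of estimates
      have step1 : |∑ k, ∫ ω, (T (x k)) ω * (y k) ω ∂μ₂| ≤
          ∑ k, ∫ ω, |(T (x k)) ω * (y k) ω| ∂μ₂ := by
        refine le_trans (Finset.abs_sum_le_sum_abs _ _) (Finset.sum_le_sum fun k _ => ?_)
        have := norm_integral_le_integral_norm (μ := μ₂) (fun ω => (T (x k)) ω * (y k) ω)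
        simpa [Real.norm_eq_abs, abs_mul] using this
      have step2 : ∑ k, ∫ ω, |(T (x k)) ω * (y k) ω| ∂μ₂ =
          ∫ ω, ∑ k, |(T (x k)) ω * (y k) ω| ∂μ₂ :=
        (integral_finset_sum _ fun k _ => hTyInt k k).symm
      have step3 : ∫ ω, ∑ k, |(T (x k)) ω * (y k) ω| ∂μ₂ ≤ ∫ ω, F ω * G ω ∂μ₂ :=
        integral_mono_ae (integrable_finset_sum _ fun k _ => hTyInt k k) hintFG hHold
      -- duality
      have hdual : ∫ ω, F ω * G ω ∂μ₂ ≤ Y.nrm F * kNrm Y.mem Y.nrm G := by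
        rcases eq_or_lt_of_le (Y.nrm_nonneg F) with h0 | h0
        · have hF0 : F = 0 := Y.nrm_eq_zero F memF h0.symm
          have hz : ∫ ω, F ω * G ω ∂μ₂ = 0 := by
            have hzz : (fun ω => F ω * G ω) =ᵐ[μ₂] fun _ => (0:ℝ) := by
              have hcz : ⇑F =ᵐ[μ₂] (0 : Ω₂ → ℝ) := by
                rw [hF0]; exact AEEqFun.coeFn_zero
              filter_upwards [hcz] with ω h1
              rw [h1, Pi.zero_apply, zero_mul]
            rw [integral_congr_ae hzz, integral_zero]
          rw [hz, ← h0, zero_mul]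
        · set f₀ : Ω₂ →ₘ[μ₂] ℝ := (Y.nrm F)⁻¹ • F with hf₀def
          have memf₀ : Y.mem f₀ := Y.smul_mem _ _ memF
          have nrmf₀ : Y.nrm f₀ ≤ 1 := by
            rw [Y.nrm_smul _ _ memF, abs_inv, abs_of_nonneg (Y.nrm_nonneg F),
              inv_mul_cancel₀ (ne_of_gt h0)]
          have hel : ∫ ω, |f₀ ω * G ω| ∂μ₂ ≤ kNrm Y.mem Y.nrm G := by
            have hbdd2 : BddAbove (Set.range
                fun f : {f : Ω₂ →ₘ[μ₂] ℝ // Y.mem f ∧ Y.nrm f ≤ 1} =>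
                  ∫ ω, |f.1 ω * G ω| ∂μ₂) := by
              refine ⟨max M 0, ?_⟩
              rintro v ⟨f, rfl⟩
              exact le_trans (hGen G hGdom f) (le_max_left _ _)
            exact le_ciSup hbdd2 ⟨f₀, memf₀, nrmf₀⟩
          have heq : ∫ ω, |f₀ ω * G ω| ∂μ₂ = (Y.nrm F)⁻¹ * ∫ ω, F ω * G ω ∂μ₂ := by
            rw [← integral_const_mul]
            refine integral_congr_ae ?_
            filter_upwards [AEEqFun.coeFn_smul ((Y.nrm F)⁻¹) F, hFnn, hGnn] with ω h1 h2 h3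
            rw [h1, Pi.smul_apply, smul_eq_mul]
            have hpos : 0 ≤ ((Y.nrm F)⁻¹ * F ω) * G ω :=
              mul_nonneg (mul_nonneg (inv_nonneg.2 (Y.nrm_nonneg F)) h2) h3
            rw [abs_of_nonneg hpos, mul_assoc]
          calc ∫ ω, F ω * G ω ∂μ₂
              = Y.nrm F * ((Y.nrm F)⁻¹ * ∫ ω, F ω * G ω ∂μ₂) := by
                field_simp
            _ = Y.nrm F * ∫ ω, |f₀ ω * G ω| ∂μ₂ := by rw [heq]
            _ ≤ Y.nrm F * kNrm Y.mem Y.nrm G :=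
                mul_le_mul_of_nonneg_left hel (Y.nrm_nonneg F)
      have hkNrmG0 : 0 ≤ kNrm Y.mem Y.nrm G :=
        Real.iSup_nonneg fun f => integral_nonneg fun ω => abs_nonneg _
      calc |∑ k, ∫ ω, (T (x k)) ω * (y k) ω ∂μ₂|
          ≤ ∑ k, ∫ ω, |(T (x k)) ω * (y k) ω| ∂μ₂ := step1
        _ = ∫ ω, ∑ k, |(T (x k)) ω * (y k) ω| ∂μ₂ := step2
        _ ≤ ∫ ω, F ω * G ω ∂μ₂ := step3
        _ ≤ Y.nrm F * kNrm Y.mem Y.nrm G := hdual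
        _ ≤ (C * S₁ + ε) * S₂ :=
            mul_le_mul hα.le hGS₂ hkNrmG0 (add_nonneg (mul_nonneg hC.le hS₁0) hε.le)
    -- conclusion from the ε-estimate
    by_contra hcon
    push_neg at hcon
    set L := |∑ k, ∫ ω, (T (x k)) ω * (y k) ω ∂μ₂| with hLdef
    have hL0 : 0 ≤ L := abs_nonneg _
    rcases eq_or_lt_of_le hS₂0 with h20 | h20
    · have h1 := hmain 1 one_pos
      rw [← h20, mul_zero] at h1
      have h2 : 0 ≤ C * (S₁ * S₂) := mul_nonneg hC.le (mul_nonneg hS₁0 hS₂0)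
      have : L ≤ 0 := h1
      linarith
    · set δ := (L - C * (S₁ * S₂)) / (2 * S₂) with hδdef
      have hδpos : 0 < δ := by
        apply div_pos
        · linarith
        · linarith
      have h1 := hmain δ hδpos
      have hδS : δ * S₂ = (L - C * (S₁ * S₂)) / 2 := by
        rw [hδdef]
        field_simp
      have h2 : (C * S₁ + δ) * S₂ = C * (S₁ * S₂) + δ * S₂ := by ring
      rw [h2, hδS] at h1
      linarith

end
end

section
/- Let X be a Banach function lattice on a σ-finite measure space, let 1 ≤ p < q < ∞ and 1/r = 1/p − 1/q. Then for every finite sequence x_1, …, x_n ∈ X: sup_{x* ∈ B_{X*}} ( ∑_{k=1}^n |⟨x_k, x*⟩|^q )^{1/q} ≤ sup_{(β_k) ∈ B_r^n} ‖ ( ∑_{k=1}^n |β_k x_k|^p )^{1/p} ‖_X ≤ ‖ ( ∑_{k=1}^n |x_k|^q )^{1/q} ‖_X. -/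
open MeasureTheory Filter

noncomputable section

section AuxScalar

lemma aux_sum_rpow_inv_le {ι : Type*} (s : Finset ι) {p : ℝ} (hp : 1 ≤ p)
    {a : ι → ℝ} (ha : ∀ i, 0 ≤ a i) :
    (∑ i ∈ s, a i ^ p) ^ p⁻¹ ≤ ∑ i ∈ s, a i := by
  have hp0 : 0 < p := lt_of_lt_of_le one_pos hp
  set S := ∑ i ∈ s, a i with hS
  have hS0 : 0 ≤ S := Finset.sum_nonneg fun i _ => ha i
  have hpe : p - 1 + 1 = p := by ring
  have h1 : ∑ i ∈ s, a i ^ p ≤ S ^ p := by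
    have hstep : ∀ i ∈ s, a i ^ p ≤ S ^ (p - 1) * a i := by
      intro i hi
      have hai : a i ≤ S := Finset.single_le_sum (fun j _ => ha j) hi
      rcases eq_or_lt_of_le (ha i) with h0 | h0
      · rw [← h0, Real.zero_rpow hp0.ne', mul_zero]
      · calc a i ^ p = a i ^ (p - 1) * a i := by
              rw [← Real.rpow_add_one h0.ne' (p - 1), hpe]
          _ ≤ S ^ (p - 1) * a i :=
              mul_le_mul_of_nonneg_right
                (Real.rpow_le_rpow (ha i) hai (by linarith)) (ha i)
    calc ∑ i ∈ s, a i ^ p ≤ ∑ i ∈ s, S ^ (p - 1) * a i := Finset.sum_le_sum hstep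
      _ = S ^ (p - 1) * S := by rw [← Finset.mul_sum]
      _ = S ^ p := by
          rcases eq_or_lt_of_le hS0 with h0 | h0
          · rw [← h0, mul_zero, Real.zero_rpow hp0.ne']
          · rw [← Real.rpow_add_one h0.ne' (p - 1), hpe]
  calc (∑ i ∈ s, a i ^ p) ^ p⁻¹ ≤ (S ^ p) ^ p⁻¹ :=
        Real.rpow_le_rpow (Finset.sum_nonneg fun i _ => Real.rpow_nonneg (ha i) p) h1
          (inv_nonneg.2 hp0.le)
    _ = S := by rw [← Real.rpow_mul hS0, mul_inv_cancel₀ hp0.ne', Real.rpow_one]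

lemma aux_holder2 {n : ℕ} {p q : ℝ} (hp : 1 ≤ p) (hpq : p < q)
    {b c : Fin n → ℝ} (hb : ∀ k, 0 ≤ b k) (hc : ∀ k, 0 ≤ c k)
    (hball : ∑ k, b k ^ (1 / p - 1 / q)⁻¹ ≤ 1) :
    (∑ k, (b k * c k) ^ p) ^ p⁻¹ ≤ (∑ k, c k ^ q) ^ q⁻¹ := by
  have hp0 : 0 < p := lt_of_lt_of_le one_pos hp
  have hq0 : 0 < q := lt_trans hp0 hpq
  set r : ℝ := (1 / p - 1 / q)⁻¹ with hrdef
  have hd : 0 < 1 / p - 1 / q := by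
    rw [sub_pos]
    exact one_div_lt_one_div_of_lt hp0 hpq
  have hr0 : 0 < r := inv_pos.2 hd
  have hpr : p < r := by
    have h1 : 1 / p - 1 / q < 1 / p := by
      have : 0 < 1 / q := by positivity
      linarith
    have h2 := one_div_lt_one_div_of_lt hd h1
    rw [one_div_one_div, one_div] at h2
    exact h2
  have hconj : Real.HolderConjugate (r / p) (q / p) := by
    refine Real.holderConjugate_iff.mpr ⟨?_, ?_⟩
    · exact (one_lt_div hp0).2 hpr
    · have hfirst : (r / p)⁻¹ = p * (1 / p - 1 / q) := by
        rw [inv_div, div_eq_mul_inv, hrdef, inv_inv]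
      rw [hfirst, inv_div]
      field_simp
      ring
  have key := Real.inner_le_Lp_mul_Lq_of_nonneg (s := Finset.univ)
      (f := fun k => b k ^ p) (g := fun k => c k ^ p) hconj
      (fun i _ => Real.rpow_nonneg (hb i) p) (fun i _ => Real.rpow_nonneg (hc i) p)
  have e1 : ∀ k : Fin n, (b k ^ p) ^ (r / p) = b k ^ r := by
    intro k
    rw [← Real.rpow_mul (hb k)]
    congr 1
    field_simp
  have e2 : ∀ k : Fin n, (c k ^ p) ^ (q / p) = c k ^ q := by
    intro k
    rw [← Real.rpow_mul (hc k)]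
    congr 1
    field_simp
  have e3 : ∀ k : Fin n, b k ^ p * c k ^ p = (b k * c k) ^ p :=
    fun k => (Real.mul_rpow (hb k) (hc k)).symm
  rw [Finset.sum_congr rfl fun k _ => e1 k, Finset.sum_congr rfl fun k _ => e2 k,
    Finset.sum_congr rfl fun k _ => e3 k] at key
  have hb1 : (∑ k, b k ^ r) ^ (1 / (r / p)) ≤ 1 :=
    Real.rpow_le_one (Finset.sum_nonneg fun k _ => Real.rpow_nonneg (hb k) r)
      (by rwa [hrdef]) (by positivity)
  have key2 : ∑ k, (b k * c k) ^ p ≤ (∑ k, c k ^ q) ^ (p / q) := by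
    have hnn : (0:ℝ) ≤ (∑ k : Fin n, c k ^ q) ^ (1 / (q / p)) :=
      Real.rpow_nonneg (Finset.sum_nonneg fun k _ => Real.rpow_nonneg (hc k) q) (1 / (q / p))
    have hmul := mul_le_mul_of_nonneg_right hb1 hnn
    rw [one_mul] at hmul
    have h := le_trans key hmul
    rwa [one_div_div] at h
  calc (∑ k, (b k * c k) ^ p) ^ p⁻¹
      ≤ ((∑ k, c k ^ q) ^ (p / q)) ^ p⁻¹ :=
        Real.rpow_le_rpow (Finset.sum_nonneg fun k _ => Real.rpow_nonneg
          (mul_nonneg (hb k) (hc k)) p) key2 (by positivity)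
    _ = (∑ k, c k ^ q) ^ q⁻¹ := by
        rw [← Real.rpow_mul (Finset.sum_nonneg fun k _ => Real.rpow_nonneg (hc k) q)]
        congr 1
        field_simp

lemma aux_holderK {n : ℕ} {p q : ℝ} (hp : 1 ≤ p) (hpq : p < q)
    {t c : Fin n → ℝ} (ht : ∀ k, 0 ≤ t k) (hc : ∀ k, 0 ≤ c k)
    (hts : ∑ k, t k ^ q ≤ 1) :
    ∑ k, t k ^ (q - 1) * c k ≤ (∑ k, (t k ^ (q / p - 1) * c k) ^ p) ^ p⁻¹ := by
  have hp0 : 0 < p := lt_of_lt_of_le one_pos hp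
  have hq0 : 0 < q := lt_trans hp0 hpq
  have hq1 : 1 < q := lt_of_le_of_lt hp hpq
  rcases eq_or_lt_of_le hp with hp1 | hp1
  · -- p = 1
    rw [← hp1]
    simp only [div_one, inv_one, Real.rpow_one]
    exact le_rfl
  · -- 1 < p
    set p' : ℝ := p / (p - 1) with hp'def
    have hpm1 : 0 < p - 1 := by linarith
    have hconj : Real.HolderConjugate p p' := by
      refine Real.holderConjugate_iff.mpr ⟨?_, ?_⟩
      · exact hp1
      · rw [hp'def, inv_div]
        field_simp
        ring
    have key := Real.inner_le_Lp_mul_Lq_of_nonneg (s := Finset.univ)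
        (f := fun k => t k ^ (q / p - 1) * c k) (g := fun k => t k ^ (q - q / p)) hconj
        (fun i _ => mul_nonneg (Real.rpow_nonneg (ht i) _) (hc i))
        (fun i _ => Real.rpow_nonneg (ht i) _)
    have hqp1 : 1 < q / p := (one_lt_div hp0).2 hpq
    have hqpq : q / p < q := div_lt_self hq0 hp1
    have e1 : ∀ k : Fin n, t k ^ (q / p - 1) * c k * t k ^ (q - q / p)
        = t k ^ (q - 1) * c k := by
      intro k
      rcases eq_or_lt_of_le (ht k) with h0 | h0
      · rw [← h0, Real.zero_rpow (sub_ne_zero.2 hqp1.ne'),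
          Real.zero_rpow (sub_ne_zero.2 hqpq.ne'),
          Real.zero_rpow (sub_ne_zero.2 hq1.ne')]
        ring
      · rw [mul_right_comm, ← Real.rpow_add h0]
        congr 2
        ring
    have e2 : ∀ k : Fin n, (t k ^ (q - q / p)) ^ p' = t k ^ q := by
      intro k
      rw [← Real.rpow_mul (ht k)]
      congr 1
      rw [hp'def]
      field_simp
    rw [Finset.sum_congr rfl fun k _ => e1 k, Finset.sum_congr rfl fun k _ => e2 k] at key
    have hg1 : (∑ k, t k ^ q) ^ (1 / p') ≤ 1 :=
      Real.rpow_le_one (Finset.sum_nonneg fun k _ => Real.rpow_nonneg (ht k) q) hts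
        (by positivity)
    have hnn : (0:ℝ) ≤ (∑ k : Fin n, (t k ^ (q / p - 1) * c k) ^ p) ^ (1 / p) :=
      Real.rpow_nonneg (Finset.sum_nonneg fun k _ => Real.rpow_nonneg
        (mul_nonneg (Real.rpow_nonneg (ht k) _) (hc k)) p) _
    have hmul := mul_le_mul_of_nonneg_left hg1 hnn
    rw [mul_one] at hmul
    have := le_trans key hmul
    rwa [one_div] at this

end AuxScalar

section AuxProof

variable {Ω : Type} [MeasurableSpace Ω] {μ : Measure Ω}

lemma aux_coeFn_sum {ι : Type*} (s : Finset ι) (f : ι → (Ω →ₘ[μ] ℝ)) :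
    ⇑(∑ i ∈ s, f i) =ᵐ[μ] fun ω => ∑ i ∈ s, f i ω := by
  classical
  induction s using Finset.induction with
  | empty => simp only [Finset.sum_empty]; exact MeasureTheory.AEEqFun.coeFn_zero
  | @insert a s ha ih =>
    rw [Finset.sum_insert ha]
    filter_upwards [MeasureTheory.AEEqFun.coeFn_add (f a) (∑ i ∈ s, f i), ih] with ω e1 e2
    simp only [Finset.sum_insert ha, e1, Pi.add_apply, e2]

lemma aux_mem_sum (X : BFL Ω μ) {ι : Type*} (s : Finset ι)
    (f : ι → (Ω →ₘ[μ] ℝ)) (h : ∀ i, X.mem (f i)) : X.mem (∑ i ∈ s, f i) := by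
  classical
  induction s using Finset.induction with
  | empty => simpa using X.zero_mem
  | @insert a s ha ih =>
    rw [Finset.sum_insert ha]
    exact X.add_mem _ _ (h a) ih

lemma aux_phi_sum (X : BFL Ω μ) (φ : (Ω →ₘ[μ] ℝ) → ℝ)
    (hadd : ∀ f g, X.mem f → X.mem g → φ (f + g) = φ f + φ g)
    (hsmul : ∀ (c : ℝ) f, X.mem f → φ (c • f) = c * φ f)
    {ι : Type*} (s : Finset ι) (f : ι → (Ω →ₘ[μ] ℝ)) (h : ∀ i, X.mem (f i)) :
    φ (∑ i ∈ s, f i) = ∑ i ∈ s, φ (f i) := by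
  classical
  have h0 : φ 0 = 0 := by
    have := hsmul 0 0 X.zero_mem
    simpa using this
  induction s using Finset.induction with
  | empty => simpa using h0
  | @insert a s ha ih =>
    rw [Finset.sum_insert ha, Finset.sum_insert ha,
      hadd _ _ (h a) (aux_mem_sum X s f h), ih]

lemma aux_coeFn_pSum (p : ℝ) {n : ℕ} (y : Fin n → (Ω →ₘ[μ] ℝ)) :
    ⇑(pSum p y) =ᵐ[μ] fun ω => (∑ k, |y k ω| ^ p) ^ p⁻¹ :=
  MeasureTheory.AEEqFun.coeFn_mk _ _

lemma aux_pSum_mem (X : BFL Ω μ) {p : ℝ} (hp : 1 ≤ p) {n : ℕ}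
    (y : Fin n → (Ω →ₘ[μ] ℝ)) (hy : ∀ k, X.mem (y k)) : X.mem (pSum p y) := by
  have habs : ∀ k, X.mem |y k| := by
    intro k
    refine X.ideal _ _ (hy k) ?_
    rw [← MeasureTheory.AEEqFun.coeFn_le]
    filter_upwards [MeasureTheory.AEEqFun.coeFn_abs (|y k|),
      MeasureTheory.AEEqFun.coeFn_abs (y k)] with ω e1 e2
    rw [e1, e2, abs_abs]
  have hg : X.mem (∑ k, |y k|) := aux_mem_sum X _ _ habs
  refine X.ideal _ _ hg ?_
  rw [← MeasureTheory.AEEqFun.coeFn_le]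
  have hk : ∀ᵐ ω ∂μ, ∀ k, (|y k| : Ω →ₘ[μ] ℝ) ω = |y k ω| :=
    MeasureTheory.ae_all_iff.2 fun k => MeasureTheory.AEEqFun.coeFn_abs (y k)
  filter_upwards [MeasureTheory.AEEqFun.coeFn_abs (pSum p y),
    MeasureTheory.AEEqFun.coeFn_abs (∑ k, |y k|), aux_coeFn_pSum p y,
    aux_coeFn_sum Finset.univ (fun k => |y k|), hk] with ω e1 e2 e3 e4 e5
  rw [e1, e2, e3, e4]
  have hnn : (0:ℝ) ≤ (∑ k, |y k ω| ^ p) ^ p⁻¹ :=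
    Real.rpow_nonneg (Finset.sum_nonneg fun k _ => Real.rpow_nonneg (abs_nonneg _) p) _
  rw [abs_of_nonneg hnn, Finset.sum_congr rfl fun k _ => e5 k]
  calc (∑ k, |y k ω| ^ p) ^ p⁻¹ ≤ ∑ k, |y k ω| :=
        aux_sum_rpow_inv_le Finset.univ hp fun k => abs_nonneg _
    _ ≤ |(∑ k, |y k ω| : ℝ)| := le_abs_self _

lemma aux_step2 (X : BFL Ω μ) {p q : ℝ} (hp : 1 ≤ p) (hpq : p < q) {n : ℕ}
    (x : Fin n → (Ω →ₘ[μ] ℝ)) (hx : ∀ k, X.mem (x k)) (β : Fin n → ℝ)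
    (hβ : ∑ k, |β k| ^ (1 / p - 1 / q)⁻¹ ≤ 1) :
    X.nrm (pSum p fun k => β k • x k) ≤ X.nrm (pSum q x) := by
  apply X.nrm_mono _ _ (aux_pSum_mem X (le_trans hp hpq.le) x hx)
  rw [← MeasureTheory.AEEqFun.coeFn_le]
  have h3 : ∀ᵐ ω ∂μ, ∀ k, (β k • x k) ω = β k * x k ω :=
    MeasureTheory.ae_all_iff.2 fun k => by
      filter_upwards [MeasureTheory.AEEqFun.coeFn_smul (β k) (x k)] with ω h
      simpa using h
  filter_upwards [MeasureTheory.AEEqFun.coeFn_abs (pSum p fun k => β k • x k),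
    MeasureTheory.AEEqFun.coeFn_abs (pSum q x),
    aux_coeFn_pSum p (fun k => β k • x k), aux_coeFn_pSum q x, h3] with ω e1 e2 e3 e4 e5
  rw [e1, e2, e3, e4]
  have hnn1 : (0:ℝ) ≤ (∑ k, |(β k • x k) ω| ^ p) ^ p⁻¹ :=
    Real.rpow_nonneg (Finset.sum_nonneg fun k _ => Real.rpow_nonneg (abs_nonneg _) p) _
  have hnn2 : (0:ℝ) ≤ (∑ k, |x k ω| ^ q) ^ q⁻¹ :=
    Real.rpow_nonneg (Finset.sum_nonneg fun k _ => Real.rpow_nonneg (abs_nonneg _) q) _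
  rw [abs_of_nonneg hnn1, abs_of_nonneg hnn2]
  have e6 : ∀ k : Fin n, |(β k • x k) ω| ^ p = (|β k| * |x k ω|) ^ p := by
    intro k
    rw [e5 k, abs_mul]
  rw [Finset.sum_congr rfl fun k _ => e6 k]
  exact aux_holder2 hp hpq (fun k => abs_nonneg _) (fun k => abs_nonneg _) hβ

end AuxProof


/-- for `1 ≤ p < q` and `1/r = 1/p - 1/q`, in any Banach function
lattice `X`:
`sup_{x* ∈ B_{X*}} (∑ |⟨xₖ, x*⟩|^q)^{1/q} ≤ sup_{β ∈ B_r^n} ‖(∑ |βₖ xₖ|^p)^{1/p}‖_X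
  ≤ ‖(∑ |xₖ|^q)^{1/q}‖_X`. -/
theorem statement12 {Ω : Type} [MeasurableSpace Ω] (μ : Measure Ω) [SigmaFinite μ]
    (X : BFL Ω μ) (p q : ℝ) (hp : 1 ≤ p) (hpq : p < q)
    {n : ℕ} (x : Fin n → (Ω →ₘ[μ] ℝ)) (hx : ∀ k, X.mem (x k)) :
    (⨆ φ : ↥(dualBall X.mem X.nrm), (∑ k, |φ.1 (x k)| ^ q) ^ q⁻¹) ≤
        strongSup X.nrm p q x ∧
      strongSup X.nrm p q x ≤ X.nrm (pSum q x) := by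
  have hp0 : 0 < p := lt_of_lt_of_le one_pos hp
  have hq0 : 0 < q := lt_trans hp0 hpq
  have hq1 : 1 < q := lt_of_le_of_lt hp hpq
  have hd : 0 < 1 / p - 1 / q := by
    rw [sub_pos]; exact one_div_lt_one_div_of_lt hp0 hpq
  have hpqne : p ≠ q := ne_of_lt hpq
  have hball_iff : ∀ β : Fin n → ℝ,
      β ∈ strongBall p q n ↔ ∑ k, |β k| ^ (1 / p - 1 / q)⁻¹ ≤ 1 := by
    intro β
    simp only [strongBall, Set.mem_setOf_eq, if_neg hpqne]
  have hball0 : (fun _ => (0:ℝ)) ∈ strongBall p q n := by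
    rw [hball_iff]
    have hz0 : ∀ k : Fin n, |(0:ℝ)| ^ (1 / p - 1 / q)⁻¹ = 0 := fun k => by
      rw [abs_zero, Real.zero_rpow (inv_ne_zero hd.ne')]
    rw [Finset.sum_congr rfl fun k _ => hz0 k, Finset.sum_const_zero]
    norm_num
  haveI hne : Nonempty ↥(strongBall p q n) := ⟨⟨_, hball0⟩⟩
  have hsup_eq : strongSup X.nrm p q x
      = ⨆ β : strongBall p q n, X.nrm (pSum p fun k => β.1 k • x k) := rfl
  have hbdd : BddAbove (Set.range fun β : strongBall p q n =>
      X.nrm (pSum p fun k => β.1 k • x k)) := by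
    refine ⟨X.nrm (pSum q x), ?_⟩
    rintro _ ⟨β, rfl⟩
    exact aux_step2 X hp hpq x hx β.1 ((hball_iff β.1).1 β.2)
  have part2 : strongSup X.nrm p q x ≤ X.nrm (pSum q x) := by
    rw [hsup_eq]
    exact ciSup_le fun β => aux_step2 X hp hpq x hx β.1 ((hball_iff β.1).1 β.2)
  have hsup0 : 0 ≤ strongSup X.nrm p q x := by
    rw [hsup_eq]
    exact le_trans (X.nrm_nonneg _) (le_ciSup hbdd ⟨_, hball0⟩)
  refine ⟨?_, part2⟩
  haveI : Nonempty ↥(dualBall X.mem X.nrm) := by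
    refine ⟨⟨fun _ => 0, ?_, ?_, ?_⟩⟩
    · intro f g _ _; ring
    · intro c f _; ring
    · intro f _; simpa using X.nrm_nonneg f
  refine ciSup_le fun φ₀ => ?_
  obtain ⟨φ, hadd, hsmul, hbnd⟩ := φ₀
  simp only
  set a : Fin n → ℝ := fun k => φ (x k) with hadef
  by_cases hz : ∑ k, |a k| ^ q = 0
  · rw [hz, Real.zero_rpow (inv_ne_zero hq0.ne')]
    exact hsup0
  · have hSnn : 0 ≤ ∑ k, |a k| ^ q :=
      Finset.sum_nonneg fun k _ => Real.rpow_nonneg (abs_nonneg _) q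
    have hSpos : 0 < ∑ k, |a k| ^ q := lt_of_le_of_ne hSnn (Ne.symm hz)
    set A : ℝ := (∑ k, |a k| ^ q) ^ q⁻¹ with hAdef
    have hApos : 0 < A := Real.rpow_pos_of_pos hSpos _
    have hAq : A ^ q = ∑ k, |a k| ^ q := by
      rw [hAdef, ← Real.rpow_mul hSnn, inv_mul_cancel₀ hq0.ne', Real.rpow_one]
    set t : Fin n → ℝ := fun k => |a k| / A with htdef
    have ht0 : ∀ k, 0 ≤ t k := fun k => div_nonneg (abs_nonneg _) hApos.le
    have htq : ∀ k, t k ^ q = |a k| ^ q / A ^ q := fun k =>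
      Real.div_rpow (abs_nonneg _) hApos.le _
    have htsum : ∑ k, t k ^ q = 1 := by
      rw [Finset.sum_congr rfl fun k _ => htq k, ← Finset.sum_div, hAq, div_self hz]
    have haA : ∀ k, |a k| = A * t k := by
      intro k
      rw [htdef]
      field_simp
    set sg : Fin n → ℝ := fun k => if 0 ≤ a k then (1:ℝ) else -1 with hsgdef
    have hsg_abs : ∀ k, |sg k| = 1 := by
      intro k; by_cases h : 0 ≤ a k <;> simp [hsgdef, h]
    have hsga : ∀ k, sg k * a k = |a k| := by
      intro k; by_cases h : 0 ≤ a k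
      · simp [hsgdef, h, abs_of_nonneg h]
      · simp [hsgdef, h, abs_of_neg (lt_of_not_ge h)]
    set γ : Fin n → ℝ := fun k => t k ^ (q - 1) * sg k with hγdef
    set β : Fin n → ℝ := fun k => t k ^ (q / p - 1) with hβdef
    have hβ0 : ∀ k, 0 ≤ β k := fun k => Real.rpow_nonneg (ht0 k) _
    have hexp : (q / p - 1) * (1 / p - 1 / q)⁻¹ = q := by
      have h1 : q / p - 1 = q * (1 / p - 1 / q) := by
        field_simp
      rw [h1, mul_assoc, mul_inv_cancel₀ hd.ne', mul_one]
    have hβball : β ∈ strongBall p q n := by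
      rw [hball_iff]
      have e : ∀ k : Fin n, |β k| ^ (1 / p - 1 / q)⁻¹ = t k ^ q := by
        intro k
        rw [abs_of_nonneg (hβ0 k), hβdef, ← Real.rpow_mul (ht0 k), hexp]
      rw [Finset.sum_congr rfl fun k _ => e k, htsum]
    have htpow : ∀ k, t k ^ (q - 1) * t k = t k ^ q := by
      intro k
      rcases eq_or_lt_of_le (ht0 k) with h0 | h0
      · rw [← h0, Real.zero_rpow (sub_ne_zero.2 hq1.ne'), Real.zero_rpow hq0.ne']
        ring
      · rw [← Real.rpow_add_one h0.ne' (q - 1)]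
        congr 1
        ring
    have hγ_abs : ∀ k, |γ k| = t k ^ (q - 1) := by
      intro k
      rw [hγdef, abs_mul, hsg_abs k, mul_one,
        abs_of_nonneg (Real.rpow_nonneg (ht0 k) _)]
    set Sf : Ω →ₘ[μ] ℝ := ∑ k, γ k • x k with hSfdef
    have hmemxs : ∀ k : Fin n, X.mem (γ k • x k) := fun k => X.smul_mem _ _ (hx k)
    have hmemS : X.mem Sf := aux_mem_sum X _ _ hmemxs
    have hγa : ∀ k, γ k * a k = A * t k ^ q := by
      intro k
      rw [hγdef, mul_assoc, hsga k, haA k, ← htpow k]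
      ring
    have hφS : φ Sf = A := by
      rw [hSfdef, aux_phi_sum X φ hadd hsmul _ _ hmemxs,
        Finset.sum_congr rfl fun k _ => hsmul (γ k) (x k) (hx k),
        Finset.sum_congr rfl fun k _ => hγa k, ← Finset.mul_sum, htsum, mul_one]
    have hA_le : A ≤ X.nrm Sf :=
      le_trans (le_trans (le_of_eq hφS.symm) (le_abs_self _)) (hbnd Sf hmemS)
    have hS_le : X.nrm Sf ≤ X.nrm (pSum p fun k => β k • x k) := by
      apply X.nrm_mono _ _ (aux_pSum_mem X hp _ fun k => X.smul_mem _ _ (hx k))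
      rw [← MeasureTheory.AEEqFun.coeFn_le]
      have hsmγ : ∀ᵐ ω ∂μ, ∀ k, (γ k • x k) ω = γ k * x k ω :=
        MeasureTheory.ae_all_iff.2 fun k => by
          filter_upwards [MeasureTheory.AEEqFun.coeFn_smul (γ k) (x k)] with ω h
          simpa using h
      have hsmβ : ∀ᵐ ω ∂μ, ∀ k, (β k • x k) ω = β k * x k ω :=
        MeasureTheory.ae_all_iff.2 fun k => by
          filter_upwards [MeasureTheory.AEEqFun.coeFn_smul (β k) (x k)] with ω h
          simpa using h
      filter_upwards [MeasureTheory.AEEqFun.coeFn_abs Sf,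
        MeasureTheory.AEEqFun.coeFn_abs (pSum p fun k => β k • x k),
        aux_coeFn_sum Finset.univ (fun k => γ k • x k), hsmγ, hsmβ,
        aux_coeFn_pSum p (fun k => β k • x k)] with ω e1 e2 e3 e4 e5 e6
      rw [e1, e2, e6]
      have hnnr : (0:ℝ) ≤ (∑ k, |(β k • x k) ω| ^ p) ^ p⁻¹ :=
        Real.rpow_nonneg (Finset.sum_nonneg fun k _ =>
          Real.rpow_nonneg (abs_nonneg _) p) _
      rw [abs_of_nonneg hnnr]
      have eS : Sf ω = ∑ k, γ k * x k ω := by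
        rw [hSfdef, e3]
        exact Finset.sum_congr rfl fun k _ => e4 k
      rw [eS]
      have eabs : ∀ k : Fin n, |γ k * x k ω| = t k ^ (q - 1) * |x k ω| := by
        intro k
        rw [abs_mul, hγ_abs k]
      have eβ : ∀ k : Fin n, |(β k • x k) ω| ^ p = (t k ^ (q / p - 1) * |x k ω|) ^ p := by
        intro k
        rw [e5 k, abs_mul, abs_of_nonneg (hβ0 k), hβdef]
      calc |∑ k, γ k * x k ω| ≤ ∑ k, |γ k * x k ω| :=
            Finset.abs_sum_le_sum_abs _ _
        _ = ∑ k, t k ^ (q - 1) * |x k ω| :=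
            Finset.sum_congr rfl fun k _ => eabs k
        _ ≤ (∑ k, (t k ^ (q / p - 1) * |x k ω|) ^ p) ^ p⁻¹ :=
            aux_holderK hp hpq ht0 (fun k => abs_nonneg _) (le_of_eq htsum)
        _ = (∑ k, |(β k • x k) ω| ^ p) ^ p⁻¹ := by
            rw [Finset.sum_congr rfl fun k _ => eβ k]
    have hfin : X.nrm (pSum p fun k => β k • x k) ≤ strongSup X.nrm p q x := by
      rw [hsup_eq]
      exact le_ciSup hbdd ⟨β, hβball⟩
    exact le_trans hA_le (le_trans hS_le hfin)

end
end
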